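/- arXiv:1203.2518 — 6 statements merged into one kernel-verified Lean document; each statement's English description precedes it below -/
import Mathlib

section
/- Let X be a positive real-valued random variable with density f on (0,∞) that is strictly decreasing on (0,∞), and let D be the first (leading) decimal digit of X. Then P(D=1) > P(D=2) > ... > P(D=9). -/
open Set MeasureTheory

lemma firstDigit_aux_subset (j : ℝ) (hj : 0 < j) :
    (⋃ n : ℤ, Ico (j * 10 ^ n) ((j + 1) * 10 ^ n)) ⊆ Ioi 0 := by
  rintro x hx
  simp only [mem_iUnion, mem_Ico] at hx
  obtain ⟨n, h1, _⟩ := hx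
  have hp : (0:ℝ) < j * 10 ^ n := mul_pos hj (zpow_pos (by norm_num) n)
  exact lt_of_lt_of_le hp h1

lemma firstDigit_aux_disj (j : ℝ) (hj : 1 ≤ j) :
    Pairwise (Function.onFun Disjoint fun n : ℤ => Ico (j * 10 ^ n) ((j + 1) * 10 ^ n)) := by
  have key : ∀ n m : ℤ, n < m →
      Disjoint (Ico (j * 10 ^ n) ((j + 1) * 10 ^ n)) (Ico (j * 10 ^ m) ((j + 1) * 10 ^ m)) := by
    intro n m hnm
    rw [Set.Ico_disjoint_Ico]
    have h10n : (0:ℝ) < 10 ^ n := zpow_pos (by norm_num) n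
    have h1 : (j + 1) * 10 ^ n ≤ j * 10 ^ (n + 1) := by
      rw [zpow_add_one₀ (by norm_num : (10:ℝ) ≠ 0)]
      nlinarith
    have h2 : j * 10 ^ (n + 1) ≤ j * 10 ^ m := by
      refine mul_le_mul_of_nonneg_left ?_ (by linarith)
      exact zpow_le_zpow_right₀ (by norm_num) (by omega)
    calc ((j + 1) * 10 ^ n) ⊓ ((j + 1) * 10 ^ m) ≤ (j + 1) * 10 ^ n := min_le_left _ _
      _ ≤ j * 10 ^ m := h1.trans h2
      _ ≤ (j * 10 ^ n) ⊔ (j * 10 ^ m) := le_max_right _ _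
  intro n m hnm
  rcases hnm.lt_or_gt with h | h
  · exact key n m h
  · exact (key m n h).symm

lemma firstDigit_key (f : ℝ → ℝ)
    (hf_int : IntegrableOn f (Ioi 0)) (hf_anti : StrictAntiOn f (Ioi 0))
    (a c : ℝ) (ha : 0 < a) (hc : 0 < c) :
    ∫ x in Ico (a + c) (a + 2 * c), f x < ∫ x in Ico a (a + c), f x := by
  have hint : ∀ u v : ℝ, 0 < u → u ≤ v → IntervalIntegrable f volume u v := by
    intro u v hu huv
    refine (hf_int.mono_set ?_).intervalIntegrable
    rw [uIcc_of_le huv]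
    exact fun x hx => lt_of_lt_of_le hu hx.1
  have hIco : ∀ u v : ℝ, u ≤ v → ∫ x in Ico u v, f x = ∫ x in u..v, f x := by
    intro u v huv
    rw [intervalIntegral.integral_of_le huv, integral_Ico_eq_integral_Ioo,
      integral_Ioc_eq_integral_Ioo]
  rw [hIco a (a + c) (by linarith), hIco (a + c) (a + 2 * c) (by linarith)]
  have hshift : (∫ x in (a + c)..(a + 2 * c), f x) = ∫ x in a..(a + c), f (x + c) := by
    rw [intervalIntegral.integral_comp_add_right f c, show a + c + c = a + 2 * c by ring]
  rw [hshift]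
  have hgi : IntervalIntegrable f volume a (a + c) := hint a (a + c) ha (by linarith)
  have hfi : IntervalIntegrable (fun x => f (x + c)) volume a (a + c) := by
    have h := (hint (a + c) (a + 2 * c) (by linarith) (by linarith)).comp_add_right c
    rw [show a + c - c = a by ring, show a + 2 * c - c = a + c by ring] at h
    exact h
  have hsub : Ioc a (a + c) ⊆ {x | f (x + c) < f x} := by
    intro x hx
    exact hf_anti (show x ∈ Ioi 0 from lt_trans ha hx.1)
      (show x + c ∈ Ioi 0 from by have := hx.1; simp only [mem_Ioi]; linarith)
      (by linarith)
  refine intervalIntegral.integral_lt_integral_of_ae_le_of_measure_setOf_lt_ne_zero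
    (by linarith) hfi hgi ?_ ?_
  · rw [Filter.EventuallyLE, ae_restrict_iff' measurableSet_Ioc]
    filter_upwards with x hx
    exact (hsub hx).le
  · have hpos : 0 < (volume.restrict (Ioc a (a + c))) {x | f (x + c) < f x} := by
      calc (0:ENNReal) < volume (Ioc a (a + c)) := by
            rw [Real.volume_Ioc, ENNReal.ofReal_pos]; linarith
        _ = (volume.restrict (Ioc a (a + c))) (Ioc a (a + c)) :=
            (Measure.restrict_apply_self _ _).symm
        _ ≤ _ := measure_mono hsub
    exact hpos.ne'

/-- If the density `f` of a positive random variable is strictly decreasing on `(0,∞)`,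
then the probabilities of the first decimal digit are strictly decreasing in the digit. -/
theorem firstDigit_probs_strict_anti
    (f : ℝ → ℝ) (hf_nonneg : ∀ x, 0 ≤ f x)
    (hf_int : IntegrableOn f (Ioi 0))
    (hf_one : ∫ x in Ioi (0 : ℝ), f x = 1)
    (hf_anti : StrictAntiOn f (Ioi 0))
    (P : ℕ → ℝ)
    (hP : ∀ k, P k =
      ∫ x in ⋃ n : ℤ, Ico ((k : ℝ) * 10 ^ n) (((k : ℝ) + 1) * 10 ^ n), f x) :
    ∀ k ∈ Finset.Icc 1 8, P (k + 1) < P k := by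
  intro k hk
  simp only [Finset.mem_Icc] at hk
  have hj1 : (1:ℝ) ≤ (k:ℝ) := by exact_mod_cast hk.1
  have rep : ∀ j : ℝ, 1 ≤ j →
      HasSum (fun n : ℤ => ∫ x in Ico (j * 10 ^ n) ((j + 1) * 10 ^ n), f x)
        (∫ x in ⋃ n : ℤ, Ico (j * 10 ^ n) ((j + 1) * 10 ^ n), f x) := by
    intro j hj
    exact hasSum_integral_iUnion (fun n => measurableSet_Ico) (firstDigit_aux_disj j hj)
      (hf_int.mono_set (firstDigit_aux_subset j (by linarith)))
  have h1 := rep (k:ℝ) hj1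
  have h2 := rep ((k:ℝ) + 1) (by linarith)
  have hPk1 := hP (k + 1)
  push_cast at hPk1
  rw [hPk1, hP k]
  have termlt : ∀ n : ℤ,
      (∫ x in Ico (((k:ℝ) + 1) * 10 ^ n) (((k:ℝ) + 1 + 1) * 10 ^ n), f x)
        < ∫ x in Ico ((k:ℝ) * 10 ^ n) (((k:ℝ) + 1) * 10 ^ n), f x := by
    intro n
    have h10 : (0:ℝ) < 10 ^ n := zpow_pos (by norm_num) n
    have h := firstDigit_key f hf_int hf_anti ((k:ℝ) * 10 ^ n) (10 ^ n)
      (mul_pos (by linarith) h10) h10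
    rw [show (k:ℝ) * 10 ^ n + 10 ^ n = ((k:ℝ) + 1) * 10 ^ n by ring,
      show (k:ℝ) * 10 ^ n + 2 * 10 ^ n = ((k:ℝ) + 1 + 1) * 10 ^ n by ring] at h
    exact h
  exact hasSum_lt (fun n => (termlt n).le) (termlt 0) h2 h1
end

section
/- Let g : ℝ → [0,∞) be a probability density that is unimodal (non-decreasing up to some point b and non-increasing after), with maximum value M. Let Ḡ(z) = ∫₀ᶻ Σ_{n∈ℤ} g(n+u) du be the cumulative distribution function of the fractional part of a random variable with density g. Then for all z ∈ [0,1], |Ḡ(z) − z| ≤ 2M. -/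
open Set MeasureTheory

/-- Gauvrit–Delahaye bound: if the density `g` is unimodal with maximum `M`, then the CDF
`Ḡ` of the fractional part satisfies `|Ḡ z − z| ≤ 2 M` for all `z ∈ [0,1]`. -/
theorem unimodal_fract_cdf_bound
    (g : ℝ → ℝ) (hg_nonneg : ∀ y, 0 ≤ g y)
    (hg_int : Integrable g)
    (hg_one : ∫ y, g y = 1)
    (hg_unimodal : ∃ b : ℝ, MonotoneOn g (Iic b) ∧ AntitoneOn g (Ici b))
    (M : ℝ) (hM : M = ⨆ y, g y)
    (G : ℝ → ℝ)
    (hG : ∀ z, G z = ∫ u in (0 : ℝ)..z, ∑' n : ℤ, g (n + u)) :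
    ∀ z ∈ Icc (0 : ℝ) 1, |G z - z| ≤ 2 * M := by
  obtain ⟨b, hmono, hanti⟩ := hg_unimodal
  -- `g b` is a global maximum
  have hgb : ∀ y, g y ≤ g b := by
    intro y
    rcases le_total y b with h | h
    · exact hmono (mem_Iic.2 h) (mem_Iic.2 le_rfl) h
    · exact hanti (mem_Ici.2 le_rfl) (mem_Ici.2 h) h
  have hbdd : BddAbove (Set.range g) := ⟨g b, by rintro _ ⟨y, rfl⟩; exact hgb y⟩
  have hgM : ∀ y, g y ≤ M := by
    intro y; rw [hM]; exact le_ciSup hbdd y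
  have hM0 : (0 : ℝ) ≤ M := le_trans (hg_nonneg 0) (hgM 0)
  -- elementary comparison of integrals over an interval with constants
  have step_le : ∀ x y c : ℝ, x ≤ y → (∀ t ∈ Icc x y, c ≤ g t) →
      c * (y - x) ≤ ∫ t in x..y, g t := by
    intro x y c hxy hc
    have h1 : (∫ _t in x..y, (c : ℝ)) = (y - x) • c := intervalIntegral.integral_const c
    have h2 : (∫ _t in x..y, (c : ℝ)) ≤ ∫ t in x..y, g t :=
      intervalIntegral.integral_mono_on hxy intervalIntegrable_const
        hg_int.intervalIntegrable hc
    rw [h1] at h2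
    simpa [smul_eq_mul, mul_comm] using h2
  have step_ge : ∀ x y c : ℝ, x ≤ y → (∀ t ∈ Icc x y, g t ≤ c) →
      (∫ t in x..y, g t) ≤ c * (y - x) := by
    intro x y c hxy hc
    have h1 : (∫ _t in x..y, (c : ℝ)) = (y - x) • c := intervalIntegral.integral_const c
    have h2 : (∫ t in x..y, g t) ≤ ∫ _t in x..y, (c : ℝ) :=
      intervalIntegral.integral_mono_on hxy hg_int.intervalIntegrable
        intervalIntegrable_const hc
    rw [h1] at h2
    simpa [smul_eq_mul, mul_comm] using h2
  -- the key pointwise estimate on the wrapped density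
  have key : ∀ u : ℝ, Summable (fun n : ℤ => g ((n : ℝ) + u)) ∧
      |(∑' n : ℤ, g ((n : ℝ) + u)) - 1| ≤ 2 * M := by
    intro u
    set I : ℤ → ℝ := fun n => ∫ t in (u + (n : ℝ))..(u + (n : ℝ) + 1), g t with hIdef
    have hI : HasSum I 1 := by
      have := hg_int.hasSum_intervalIntegral (μ := volume) u
      rwa [hg_one] at this
    have I_nonneg : ∀ n, 0 ≤ I n := by
      intro n
      simp only [hIdef]
      exact intervalIntegral.integral_nonneg (by linarith) (fun t _ => hg_nonneg t)
    have I_le_M : ∀ n, I n ≤ M := by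
      intro n
      simp only [hIdef]
      have := step_ge (u + (n : ℝ)) (u + (n : ℝ) + 1) M (by linarith) (fun t _ => hgM t)
      simpa using this
    set n₀ : ℤ := ⌊b - u⌋ with hn₀
    have hb1 : (n₀ : ℝ) + u ≤ b := by
      have := Int.floor_le (b - u); rw [← hn₀] at this; linarith
    have hb2 : b < (n₀ : ℝ) + 1 + u := by
      have := Int.lt_floor_add_one (b - u); rw [← hn₀] at this; linarith
    set S : Finset ℤ := {n₀, n₀ + 1} with hS
    -- upper comparison away from the mode
    have hbound : ∀ n : {x : ℤ // x ∉ S},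
        g (((n : ℤ) : ℝ) + u) ≤ I (if (n : ℤ) ≤ n₀ then (n : ℤ) else (n : ℤ) - 1) := by
      rintro ⟨n, hn⟩
      simp only [hS, Finset.mem_insert, Finset.mem_singleton] at hn
      push_neg at hn
      by_cases hle : n ≤ n₀
      · have hlt : n + 1 ≤ n₀ := by omega
        have hltR : (n : ℝ) + 1 ≤ (n₀ : ℝ) := by exact_mod_cast hlt
        simp only [if_pos hle, hIdef]
        have h := step_le (u + (n : ℝ)) (u + (n : ℝ) + 1) (g ((n : ℝ) + u)) (by linarith)
          (fun t ht => hmono (mem_Iic.2 (by linarith)) (mem_Iic.2 (by linarith [ht.2]))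
            (by linarith [ht.1]))
        have hE : u + (n : ℝ) + 1 - (u + (n : ℝ)) = 1 := by ring
        rw [hE, mul_one] at h
        exact h
      · have hge : n₀ + 2 ≤ n := by omega
        have hgeR : (n₀ : ℝ) + 2 ≤ (n : ℝ) := by exact_mod_cast hge
        simp only [if_neg hle, hIdef]
        have hc : ((n - 1 : ℤ) : ℝ) = (n : ℝ) - 1 := by push_cast; ring
        rw [hc]
        have h := step_le (u + ((n : ℝ) - 1)) (u + ((n : ℝ) - 1) + 1) (g ((n : ℝ) + u))
          (by linarith)
          (fun t ht => hanti (mem_Ici.2 (by linarith [ht.1])) (mem_Ici.2 (by linarith))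
            (by linarith [ht.2]))
        have hE : u + ((n : ℝ) - 1) + 1 - (u + ((n : ℝ) - 1)) = 1 := by ring
        rw [hE, mul_one] at h
        exact h
    have heinj : Function.Injective
        (fun n : {x : ℤ // x ∉ S} => if (n : ℤ) ≤ n₀ then (n : ℤ) else (n : ℤ) - 1) := by
      rintro ⟨a, ha⟩ ⟨c, hc⟩ h
      simp only [hS, Finset.mem_insert, Finset.mem_singleton] at ha hc
      push_neg at ha hc
      apply Subtype.ext
      simp only at h ⊢
      split_ifs at h <;> omega
    have hsub : Summable (fun n : {x : ℤ // x ∉ S} => g (((n : ℤ) : ℝ) + u)) := by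
      refine Summable.of_nonneg_of_le (fun n => hg_nonneg _) hbound ?_
      exact hI.summable.comp_injective heinj
    have hf : Summable (fun n : ℤ => g ((n : ℝ) + u)) := (Finset.summable_compl_iff S).1 hsub
    refine ⟨hf, ?_⟩
    -- upper bound
    have hsplit := hf.sum_add_tsum_subtype_compl S
    have hsum2 : ∑ x ∈ S, g ((x : ℝ) + u) ≤ 2 * M := by
      rw [hS, Finset.sum_pair (by omega : n₀ ≠ n₀ + 1)]
      have h1 := hgM ((n₀ : ℝ) + u)
      have h2 := hgM (((n₀ + 1 : ℤ) : ℝ) + u)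
      linarith
    have htail : (∑' x : {x : ℤ // x ∉ S}, g (((x : ℤ) : ℝ) + u)) ≤ 1 := by
      rw [← hI.tsum_eq]
      exact Summable.tsum_le_tsum_of_inj _ heinj (fun c _ => I_nonneg c) hbound hsub hI.summable
    have hupper : (∑' n : ℤ, g ((n : ℝ) + u)) ≤ 1 + 2 * M := by
      rw [← hsplit]; linarith
    -- lower bound
    have hsplit2 := Summable.sum_add_tsum_subtype_compl hI.summable ({n₀} : Finset ℤ)
    rw [Finset.sum_singleton, hI.tsum_eq] at hsplit2
    have hbound2 : ∀ n : {x : ℤ // x ∉ ({n₀} : Finset ℤ)},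
        I (n : ℤ) ≤ (fun m : ℤ => g ((m : ℝ) + u))
          (if (n : ℤ) < n₀ then (n : ℤ) + 1 else (n : ℤ)) := by
      rintro ⟨n, hn⟩
      simp only [Finset.mem_singleton] at hn
      by_cases hlt : n < n₀
      · have hltR : (n : ℝ) + 1 ≤ (n₀ : ℝ) := by exact_mod_cast (by omega : n + 1 ≤ n₀)
        simp only [if_pos hlt, hIdef]
        have hc : ((n + 1 : ℤ) : ℝ) = (n : ℝ) + 1 := by push_cast; ring
        rw [hc]
        have h := step_ge (u + (n : ℝ)) (u + (n : ℝ) + 1) (g ((n : ℝ) + 1 + u)) (by linarith)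
          (fun t ht => hmono (mem_Iic.2 (by linarith [ht.2])) (mem_Iic.2 (by linarith))
            (by linarith [ht.2]))
        have hE : u + (n : ℝ) + 1 - (u + (n : ℝ)) = 1 := by ring
        rw [hE, mul_one] at h
        exact h
      · have hge : n₀ + 1 ≤ n := by omega
        have hgeR : (n₀ : ℝ) + 1 ≤ (n : ℝ) := by exact_mod_cast hge
        simp only [if_neg hlt, hIdef]
        have h := step_ge (u + (n : ℝ)) (u + (n : ℝ) + 1) (g ((n : ℝ) + u)) (by linarith)
          (fun t ht => hanti (mem_Ici.2 (by linarith)) (mem_Ici.2 (by linarith [ht.1]))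
            (by linarith [ht.1]))
        have hE : u + (n : ℝ) + 1 - (u + (n : ℝ)) = 1 := by ring
        rw [hE, mul_one] at h
        exact h
    have he2inj : Function.Injective
        (fun n : {x : ℤ // x ∉ ({n₀} : Finset ℤ)} =>
          if (n : ℤ) < n₀ then (n : ℤ) + 1 else (n : ℤ)) := by
      rintro ⟨a, ha⟩ ⟨c, hc⟩ h
      simp only [Finset.mem_singleton] at ha hc
      apply Subtype.ext
      simp only at h ⊢
      split_ifs at h <;> omega
    have hsub2 : Summable (fun x : {x : ℤ // x ∉ ({n₀} : Finset ℤ)} => I (x : ℤ)) := by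
      have := hI.summable.comp_injective
        (Subtype.val_injective : Function.Injective
          (fun x : {x : ℤ // x ∉ ({n₀} : Finset ℤ)} => (x : ℤ)))
      exact this
    have htail2 : (∑' x : {x : ℤ // x ∉ ({n₀} : Finset ℤ)}, I (x : ℤ))
        ≤ ∑' n : ℤ, g ((n : ℝ) + u) :=
      Summable.tsum_le_tsum_of_inj _ he2inj (fun c _ => hg_nonneg _) hbound2 hsub2 hf
    have hlower : 1 - M ≤ ∑' n : ℤ, g ((n : ℝ) + u) := by
      have := I_le_M n₀
      linarith
    rw [abs_le]
    constructor <;> linarith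
  -- measurability of the wrapped density
  have gm : Measurable g := by
    have h1 : Monotone (fun y => g (min y b)) := fun y₁ y₂ h =>
      hmono (mem_Iic.2 (min_le_right _ _)) (mem_Iic.2 (min_le_right _ _))
        (min_le_min h le_rfl)
    have h2 : Antitone (fun y => g (max y b)) := fun y₁ y₂ h =>
      hanti (mem_Ici.2 (le_max_right _ _)) (mem_Ici.2 (le_max_right _ _))
        (max_le_max h le_rfl)
    have hgeq : g = fun y => if y ≤ b then g (min y b) else g (max y b) := by
      funext y
      split_ifs with h
      · rw [min_eq_left h]
      · rw [max_eq_left (le_of_not_ge h)]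
    rw [hgeq]
    exact Measurable.ite measurableSet_Iic h1.measurable h2.measurable
  set F : ℝ → ℝ := fun u => ∑' n : ℤ, g ((n : ℝ) + u) with hFdef
  have Fm : Measurable F := by
    have hFeq : F = fun u => (∑' n : ℤ, ENNReal.ofReal (g ((n : ℝ) + u))).toReal := by
      funext u
      rw [hFdef]
      simp only
      rw [ENNReal.tsum_toReal_eq (fun _ => ENNReal.ofReal_ne_top)]
      exact tsum_congr fun n => (ENNReal.toReal_ofReal (hg_nonneg _)).symm
    rw [hFeq]
    exact (Measurable.ennreal_tsum fun n =>
      ENNReal.measurable_ofReal.comp (gm.comp (measurable_id.const_add _))).ennreal_toReal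
  intro z hz
  obtain ⟨hz0, hz1⟩ := hz
  have hFabs : ∀ u : ℝ, |F u - 1| ≤ 2 * M := fun u => (key u).2
  have hFi : IntervalIntegrable F volume 0 z := by
    rw [intervalIntegrable_iff_integrableOn_Ioc_of_le hz0]
    refine Integrable.mono' (g := fun _ => 1 + 2 * M)
      (integrableOn_const measure_Ioc_lt_top.ne) Fm.aestronglyMeasurable.restrict
      (ae_of_all _ fun u => ?_)
    show ‖F u‖ ≤ 1 + 2 * M
    have h := hFabs u
    rw [Real.norm_eq_abs]
    have h2 := abs_sub_abs_le_abs_sub (F u) 1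
    simp only [abs_one] at h2
    linarith
  have hFi1 : IntervalIntegrable (fun u => F u - 1) volume 0 z :=
    hFi.sub intervalIntegrable_const
  have hsubint : (∫ u in (0:ℝ)..z, F u) - z = ∫ u in (0:ℝ)..z, (F u - 1) := by
    rw [intervalIntegral.integral_sub hFi intervalIntegrable_const]
    simp
  rw [hG z]
  calc |(∫ u in (0:ℝ)..z, F u) - z| = |∫ u in (0:ℝ)..z, (F u - 1)| := by rw [hsubint]
    _ ≤ ∫ u in (0:ℝ)..z, |F u - 1| :=
        intervalIntegral.abs_integral_le_integral_abs hz0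
    _ ≤ ∫ _u in (0:ℝ)..z, (2 * M) :=
        intervalIntegral.integral_mono_on hz0 hFi1.abs intervalIntegrable_const
          (fun u _ => hFabs u)
    _ = (z - 0) • (2 * M) := intervalIntegral.integral_const _
    _ ≤ 2 * M := by
        simp only [sub_zero, smul_eq_mul]
        nlinarith
end

section
/- Let g : ℝ → [0,∞) be a probability density of finite total variation TV(g), and let ḡ(z) = Σ_{n∈ℤ} g(n+z) for z ∈ [0,1] (with ḡ(1)=ḡ(0)). Then the total variation of ḡ on [0,1] is at most TV(g). -/
open Set MeasureTheory

private lemma sum_range_mul_blocks (K B : ℕ) (a : ℕ → ENNReal) :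
    ∑ j ∈ Finset.range (K * B), a j
      = ∑ k ∈ Finset.range K, ∑ i ∈ Finset.range B, a (B * k + i) := by
  induction K with
  | zero => simp
  | succ K ih =>
    rw [Nat.succ_mul, Finset.sum_range_add, ih, Finset.sum_range_succ, Nat.mul_comm K B]

set_option maxHeartbeats 1000000 in
/-- Key combinatorial lemma: concatenating translated partitions. -/
private lemma lemD (g : ℝ → ℝ) (m : ℕ) (u : ℕ → ℝ) (hu : Monotone u)
    (h1 : u m ≤ u 0 + 1) (F : Finset ℤ) :
    ∑ n ∈ F, ∑ i ∈ Finset.range m, edist (g (n + u (i + 1))) (g (n + u i))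
      ≤ eVariationOn g univ := by
  classical
  set B := m + 1 with hB
  have hBpos : 0 < B := Nat.succ_pos m
  obtain ⟨N, hN⟩ : ∃ N : ℕ, ∀ n ∈ F, n.natAbs ≤ N :=
    ⟨F.sup Int.natAbs, fun n hn => Finset.le_sup hn⟩
  have hFsub : F ⊆ Finset.Icc (-(N : ℤ)) N := by
    intro n hn
    have := hN n hn
    simp only [Finset.mem_Icc]
    omega
  set K := 2 * N + 1 with hK
  set w : ℕ → ℝ := fun j => ((j / B : ℕ) : ℝ) - N + u (j % B) with hw
  have hwmod : ∀ k i : ℕ, i ≤ m → w (B * k + i) = ((k : ℝ) - N) + u i := by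
    intro k i hi
    have h1' : (B * k + i) / B = k := by
      rw [Nat.mul_add_div hBpos, Nat.div_eq_of_lt (by omega), Nat.add_zero]
    have h2' : (B * k + i) % B = i := by
      rw [Nat.mul_add_mod, Nat.mod_eq_of_lt (by omega)]
    simp only [hw]
    rw [h1', h2']
  have hwmono : Monotone w := by
    apply monotone_nat_of_le_succ
    intro j
    obtain ⟨q, r, hrB, rfl⟩ : ∃ q r, r < B ∧ j = B * q + r :=
      ⟨j / B, j % B, Nat.mod_lt _ hBpos, (Nat.div_add_mod j B).symm⟩
    have hdiv : (B * q + r) / B = q := by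
      rw [Nat.mul_add_div hBpos, Nat.div_eq_of_lt hrB, Nat.add_zero]
    have hmodr : (B * q + r) % B = r := by
      rw [Nat.mul_add_mod, Nat.mod_eq_of_lt hrB]
    rcases eq_or_lt_of_le (Nat.lt_succ_iff.mp hrB) with hr | hr
    · -- r = m : block boundary
      have hj1 : B * q + r + 1 = B * (q + 1) := by
        rw [Nat.mul_succ, Nat.add_assoc, hr, hB]
      have hdiv1 : (B * q + r + 1) / B = q + 1 := by
        rw [hj1]; exact Nat.mul_div_cancel_left _ hBpos
      have hmod1 : (B * q + r + 1) % B = 0 := by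
        rw [hj1]; exact Nat.mul_mod_right B (q + 1)
      simp only [hw]
      rw [hdiv, hmodr, hdiv1, hmod1, hr]
      push_cast
      linarith
    · -- within block
      have e1 : B * q + r + 1 = B * q + (r + 1) := Nat.add_assoc _ _ _
      have hdiv1 : (B * q + r + 1) / B = q := by
        rw [e1, Nat.mul_add_div hBpos, Nat.div_eq_of_lt (by omega), Nat.add_zero]
      have hmod1 : (B * q + r + 1) % B = r + 1 := by
        rw [e1, Nat.mul_add_mod, Nat.mod_eq_of_lt (by omega)]
      simp only [hw]
      rw [hdiv, hmodr, hdiv1, hmod1]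
      have := hu (Nat.le_succ r)
      linarith
  calc
    ∑ n ∈ F, ∑ i ∈ Finset.range m, edist (g (n + u (i + 1))) (g (n + u i))
        ≤ ∑ n ∈ Finset.Icc (-(N : ℤ)) N,
            ∑ i ∈ Finset.range m, edist (g (n + u (i + 1))) (g (n + u i)) :=
      Finset.sum_le_sum_of_subset hFsub
    _ = ∑ k ∈ Finset.range K,
          ∑ i ∈ Finset.range m, edist (g (((k : ℝ) - N) + u (i + 1))) (g (((k : ℝ) - N) + u i)) := by
      apply Finset.sum_nbij' (fun n : ℤ => (n + (N:ℤ)).toNat) (fun k : ℕ => (k : ℤ) - N)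
      · intro n hn
        simp only [Finset.mem_Icc] at hn
        simp only [Finset.mem_range]
        omega
      · intro k hk
        simp only [Finset.mem_range] at hk
        simp only [Finset.mem_Icc]
        omega
      · intro n hn
        simp only [Finset.mem_Icc] at hn
        omega
      · intro k hk
        simp only [Finset.mem_range] at hk
        omega
      · intro n hn
        simp only [Finset.mem_Icc] at hn
        have hcast : (((n + N).toNat : ℝ) - N) = (n : ℝ) := by
          have h' : ((n + N).toNat : ℤ) = n + N := by omega
          have h'' := congrArg (fun x : ℤ => (x : ℝ)) h'
          push_cast at h''
          linarith
        rw [hcast]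
    _ ≤ ∑ k ∈ Finset.range K,
          ∑ i ∈ Finset.range B, edist (g (w (B * k + i + 1))) (g (w (B * k + i))) := by
      apply Finset.sum_le_sum
      intro k _
      have hsub : Finset.range m ⊆ Finset.range B := Finset.range_subset_range.mpr (by omega)
      refine le_trans (le_of_eq ?_) (Finset.sum_le_sum_of_subset hsub)
      apply Finset.sum_congr rfl
      intro i hi
      simp only [Finset.mem_range] at hi
      rw [Nat.add_assoc (B * k) i 1, hwmod k (i + 1) (by omega), hwmod k i (by omega)]
    _ = ∑ j ∈ Finset.range (K * B), edist (g (w (j + 1))) (g (w j)) :=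
      (sum_range_mul_blocks K B (fun j => edist (g (w (j + 1))) (g (w j)))).symm
    _ ≤ eVariationOn g univ :=
      eVariationOn.sum_le (f := g) (n := K * B) hwmono (fun _ => mem_univ _)

private lemma lemC (g : ℝ → ℝ) (hTV : eVariationOn g univ ≠ ⊤) {z t : ℝ}
    (hzt : z ≤ t) (ht : t ≤ z + 1) (F : Finset ℤ) :
    ∑ n ∈ F, |g (n + z) - g (n + t)| ≤ (eVariationOn g univ).toReal := by
  have hD := lemD g 1 (fun i => if i = 0 then z else t)
    (monotone_nat_of_le_succ (by
      intro j
      rcases Nat.eq_zero_or_pos j with hj | hj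
      · simp [hj, hzt]
      · simp [Nat.pos_iff_ne_zero.mp hj]))
    (by simpa using ht) F
  simp only [Finset.range_one, Finset.sum_singleton] at hD
  norm_num at hD
  have hsum : ∑ n ∈ F, |g (n + z) - g (n + t)|
      = (∑ n ∈ F, edist (g (↑n + t)) (g (↑n + z))).toReal := by
    rw [ENNReal.toReal_sum (fun n _ => edist_ne_top _ _)]
    apply Finset.sum_congr rfl
    intro n _
    rw [← dist_edist, Real.dist_eq, abs_sub_comm]
  rw [hsum]
  exact ENNReal.toReal_mono hTV hD

private lemma summable_stacked (g : ℝ → ℝ) (hg_nonneg : ∀ y, 0 ≤ g y)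
    (hg_int : Integrable g) (hg_one : ∫ y, g y = 1)
    (hTV : eVariationOn g univ ≠ ⊤) (z : ℝ) :
    Summable (fun n : ℤ => g (n + z)) := by
  apply summable_of_sum_le (c := (eVariationOn g univ).toReal + 2)
    (fun n => hg_nonneg _)
  intro F
  have hint : ∀ n : ℤ, Integrable (fun x => g ((n : ℝ) + x)) :=
    fun n => hg_int.comp_add_left _
  obtain ⟨t, htmem, htle⟩ : ∃ t ∈ Ioc z (z + 1), ∑ n ∈ F, g (n + t) ≤ 2 := by
    by_contra hcon
    push_neg at hcon
    have hIOn : IntegrableOn (fun x => ∑ n ∈ F, g ((n : ℝ) + x)) (Ioc z (z + 1)) :=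
      (integrable_finset_sum F (fun n _ => hint n)).integrableOn
    have hvol : volume (Ioc z (z + 1)) = 1 := by
      rw [Real.volume_Ioc]; norm_num
    have h2 : (2 : ℝ) * (volume (Ioc z (z + 1))).toReal
        ≤ ∫ x in Ioc z (z + 1), ∑ n ∈ F, g ((n : ℝ) + x) :=
      by
        have h := setIntegral_ge_of_const_le (μ := volume) measurableSet_Ioc (by simp [hvol])
          (fun x hx => (hcon x hx).le) hIOn
        simpa [Measure.real, smul_eq_mul, mul_comm] using h
    rw [hvol] at h2
    norm_num at h2
    have heq : ∫ x in Ioc z (z + 1), ∑ n ∈ F, g ((n : ℝ) + x)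
        = ∑ n ∈ F, ∫ x in Ioc z (z + 1), g ((n : ℝ) + x) :=
      integral_finset_sum F (fun n _ => (hint n).integrableOn)
    have heach : ∀ n : ℤ, ∫ x in Ioc z (z + 1), g ((n : ℝ) + x)
        = ∫ x in Ioc ((n : ℝ) + z) ((n : ℝ) + z + 1), g x := by
      intro n
      rw [← intervalIntegral.integral_of_le (by linarith : z ≤ z + 1),
        intervalIntegral.integral_comp_add_left g (n : ℝ),
        intervalIntegral.integral_of_le (by linarith : (n : ℝ) + z ≤ (n : ℝ) + (z + 1))]
      congr 1
      ring_nf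
    have hdisj : (↑F : Set ℤ).Pairwise
        (Function.onFun Disjoint fun n : ℤ => Ioc ((n : ℝ) + z) ((n : ℝ) + z + 1)) := by
      intro a _ b _ hab
      simp only [Function.onFun]
      rw [Set.Ioc_disjoint_Ioc]
      rcases lt_or_gt_of_ne hab with h | h
      · have hab' : (a : ℝ) + 1 ≤ b := by exact_mod_cast Int.add_one_le_iff.mpr h
        calc min ((a:ℝ) + z + 1) ((b:ℝ) + z + 1) ≤ (a:ℝ) + z + 1 := min_le_left _ _
          _ ≤ (b:ℝ) + z := by linarith
          _ ≤ max ((a:ℝ) + z) ((b:ℝ) + z) := le_max_right _ _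
      · have hab' : (b : ℝ) + 1 ≤ a := by exact_mod_cast Int.add_one_le_iff.mpr h
        calc min ((a:ℝ) + z + 1) ((b:ℝ) + z + 1) ≤ (b:ℝ) + z + 1 := min_le_right _ _
          _ ≤ (a:ℝ) + z := by linarith
          _ ≤ max ((a:ℝ) + z) ((b:ℝ) + z) := le_max_left _ _
    have hle1 : ∑ n ∈ F, ∫ x in Ioc ((n : ℝ) + z) ((n : ℝ) + z + 1), g x ≤ 1 := by
      rw [← integral_biUnion_finset F (fun n _ => measurableSet_Ioc) hdisj
        (fun n _ => hg_int.integrableOn)]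
      rw [← hg_one]
      exact setIntegral_le_integral hg_int (Filter.Eventually.of_forall hg_nonneg)
    rw [heq] at h2
    simp_rw [heach] at h2
    linarith
  obtain ⟨htz, htz1⟩ := htmem
  calc ∑ n ∈ F, g (n + z)
      ≤ ∑ n ∈ F, (|g (n + z) - g (n + t)| + g (n + t)) := by
        apply Finset.sum_le_sum
        intro n _
        have := le_abs_self (g (n + z) - g (n + t))
        linarith
    _ = (∑ n ∈ F, |g (n + z) - g (n + t)|) + ∑ n ∈ F, g (n + t) := Finset.sum_add_distrib
    _ ≤ (eVariationOn g univ).toReal + 2 :=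
        add_le_add (lemC g hTV htz.le (by linarith) F) htle

/-- The total variation of the stacked density `ḡ(z) = ∑_{n∈ℤ} g (n+z)` on `[0,1]`
is at most the total variation of `g` on `ℝ`. -/
theorem eVariationOn_stacked_le
    (g : ℝ → ℝ) (hg_nonneg : ∀ y, 0 ≤ g y)
    (hg_int : Integrable g)
    (hg_one : ∫ y, g y = 1)
    (hTV : eVariationOn g univ ≠ ⊤) :
    eVariationOn (fun z => ∑' n : ℤ, g (n + z)) (Icc (0 : ℝ) 1)
      ≤ eVariationOn g univ := by
  have hsumm : ∀ z : ℝ, Summable (fun n : ℤ => g (n + z)) :=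
    summable_stacked g hg_nonneg hg_int hg_one hTV
  have keyA : ∀ a b : ℝ, edist (∑' n : ℤ, g (n + b)) (∑' n : ℤ, g (n + a))
      ≤ ∑' n : ℤ, edist (g (n + b)) (g (n + a)) := by
    intro a b
    have hb := hsumm b
    have ha := hsumm a
    have hdiff : (∑' n : ℤ, g (n + b)) - (∑' n : ℤ, g (n + a))
        = ∑' n : ℤ, (g (n + b) - g (n + a)) := (Summable.tsum_sub hb ha).symm
    rw [edist_dist, Real.dist_eq, hdiff]
    have habs : Summable fun n : ℤ => |g (n + b) - g (n + a)| := (hb.sub ha).abs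
    have h1 : |∑' n : ℤ, (g (n + b) - g (n + a))| ≤ ∑' n : ℤ, |g (n + b) - g (n + a)| := by
      simpa [Real.norm_eq_abs] using
        norm_tsum_le_tsum_norm (f := fun n : ℤ => g (n + b) - g (n + a))
          (by simpa [Real.norm_eq_abs] using habs)
    calc ENNReal.ofReal |∑' n : ℤ, (g (n + b) - g (n + a))|
        ≤ ENNReal.ofReal (∑' n : ℤ, |g (n + b) - g (n + a)|) := ENNReal.ofReal_le_ofReal h1
      _ = ∑' n : ℤ, ENNReal.ofReal |g (n + b) - g (n + a)| :=
          ENNReal.ofReal_tsum_of_nonneg (fun n => abs_nonneg _) habs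
      _ = ∑' n : ℤ, edist (g (n + b)) (g (n + a)) := by
          apply tsum_congr
          intro n
          rw [edist_dist, Real.dist_eq]
  rw [eVariationOn]
  apply iSup_le
  rintro ⟨m, u, hu, us⟩
  simp only
  calc ∑ i ∈ Finset.range m, edist (∑' n : ℤ, g (n + u (i + 1))) (∑' n : ℤ, g (n + u i))
      ≤ ∑ i ∈ Finset.range m, ∑' n : ℤ, edist (g (n + u (i + 1))) (g (n + u i)) :=
        Finset.sum_le_sum (fun i _ => keyA (u i) (u (i + 1)))
    _ = ∑' n : ℤ, ∑ i ∈ Finset.range m, edist (g (n + u (i + 1))) (g (n + u i)) :=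
        (Summable.tsum_finsetSum (fun i _ => ENNReal.summable)).symm
    _ ≤ eVariationOn g univ := by
        rw [ENNReal.tsum_eq_iSup_sum]
        apply iSup_le
        intro F
        exact lemD g m u hu (by
          have h0 := (us 0).1
          have hm := (us m).2
          linarith) F
end

section
/- Let g be a probability density on ℝ with finite total variation TV(g) and let ḡ(z) = Σ_{n∈ℤ} g(n+z) be the density of the fractional part. Then sup_{z∈[0,1]} |ḡ(z) − 1| ≤ TV(g)/2. -/
open Set MeasureTheory
open scoped ENNReal

private lemma sum_range_two_mul (f : ℕ → ℝ≥0∞) (M : ℕ) :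
    ∑ i ∈ Finset.range (2 * M), f i = ∑ j ∈ Finset.range M, (f (2 * j) + f (2 * j + 1)) := by
  induction M with
  | zero => simp
  | succ M ih =>
      rw [Nat.mul_succ, show 2*M + 2 = (2*M + 1) + 1 by ring, Finset.sum_range_succ,
        Finset.sum_range_succ, ih, Finset.sum_range_succ]
      ring

private lemma pair_edist_tsum_le (g : ℝ → ℝ) {a b : ℝ} (hab : a ≤ b) (hba : b ≤ a + 1) :
    (∑' n : ℤ, (edist (g ((n:ℝ) + b)) (g ((n:ℝ) + a)) +
        edist (g ((n:ℝ) + 1 + a)) (g ((n:ℝ) + b))))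
      ≤ eVariationOn g univ := by
  rw [ENNReal.tsum_eq_iSup_sum]
  refine iSup_le fun F => ?_
  set N : ℕ := F.sup Int.natAbs with hN
  have hF : ∀ n ∈ F, n.natAbs ≤ N := fun n hn => Finset.le_sup hn
  -- the interleaved monotone sequence
  set u : ℕ → ℝ := fun k => (-(N:ℝ)) + (k / 2 : ℕ) + (if Even k then a else b) with hu
  have hmono : Monotone u := by
    apply monotone_nat_of_le_succ
    intro k
    by_cases hk : Even k
    · obtain ⟨j, rfl⟩ := hk
      have h1 : (j + j + 1) / 2 = (j + j) / 2 := by omega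
      simp only [hu, h1, if_pos (Even.add_self j), if_neg (by simp [Nat.even_add_one, Even.add_self j] : ¬ Even (j+j+1))]
      linarith
    · obtain ⟨j, rfl⟩ := Nat.not_even_iff_odd.mp hk
      have h1 : ((2*j + 1 + 1) / 2 : ℕ) = (2*j+1)/2 + 1 := by omega
      have h2 : Even (2*j+1+1) := by refine ⟨j+1, by ring⟩
      simp only [hu, h1, if_pos h2, if_neg hk]
      push_cast
      linarith
  have hkey := eVariationOn.sum_le (f := g) (n := 2 * (2 * N + 1)) hmono (fun i => mem_univ (u i))
  refine le_trans ?_ hkey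
  have hval2 : ∀ j : ℕ, u (2 * j) = (-(N:ℝ) + j) + a := by
    intro j
    simp only [hu, if_pos (even_two_mul j), Nat.mul_div_cancel_left _ (by norm_num : 0 < 2)]
  have hval1 : ∀ j : ℕ, u (2 * j + 1) = (-(N:ℝ) + j) + b := by
    intro j
    have : (2*j+1)/2 = j := by omega
    simp only [hu, this, if_neg (by simp [Nat.even_add_one, even_two_mul j] :
      ¬ Even (2*j+1))]
  -- F is contained in image of range (2N+1)
  have hsub : F ⊆ (Finset.range (2 * N + 1)).image (fun j : ℕ => -(N:ℤ) + j) := by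
    intro n hn
    have := hF n hn
    refine Finset.mem_image.mpr ⟨(n + N).toNat, Finset.mem_range.mpr (by omega), by omega⟩
  calc ∑ n ∈ F, (edist (g ((n:ℝ) + b)) (g ((n:ℝ) + a)) +
        edist (g ((n:ℝ) + 1 + a)) (g ((n:ℝ) + b)))
      ≤ ∑ n ∈ (Finset.range (2 * N + 1)).image (fun j : ℕ => -(N:ℤ) + j),
          (edist (g ((n:ℝ) + b)) (g ((n:ℝ) + a)) +
            edist (g ((n:ℝ) + 1 + a)) (g ((n:ℝ) + b))) :=
        Finset.sum_le_sum_of_subset hsub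
    _ = ∑ j ∈ Finset.range (2 * N + 1),
          (edist (g ((-(N:ℝ) + j) + b)) (g ((-(N:ℝ) + j) + a)) +
            edist (g ((-(N:ℝ) + j) + 1 + a)) (g ((-(N:ℝ) + j) + b))) := by
        rw [Finset.sum_image (by intro x _ y _ h; simp only at h; omega)]
        refine Finset.sum_congr rfl fun j _ => ?_
        push_cast
        ring_nf
    _ = ∑ i ∈ Finset.range (2 * (2 * N + 1)), edist (g (u (i + 1))) (g (u i)) := by
        rw [sum_range_two_mul]
        refine Finset.sum_congr rfl fun j _ => ?_
        rw [hval2 j, hval1 j, show 2*j+1+1 = 2*(j+1) by ring, hval2 (j+1)]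
        push_cast
        ring_nf

private lemma Phi_osc (g : ℝ → ℝ) {a b : ℝ} (hab : a ≤ b) (hba : b ≤ a + 1) :
    (∑' n : ℤ, ENNReal.ofReal (g ((n:ℝ) + b))) ≤
      (∑' n : ℤ, ENNReal.ofReal (g ((n:ℝ) + a))) + eVariationOn g univ / 2 ∧
    (∑' n : ℤ, ENNReal.ofReal (g ((n:ℝ) + a))) ≤
      (∑' n : ℤ, ENNReal.ofReal (g ((n:ℝ) + b))) + eVariationOn g univ / 2 := by
  set T := eVariationOn g univ with hT
  set Φa := ∑' n : ℤ, ENNReal.ofReal (g ((n:ℝ) + a)) with hΦa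
  set Φb := ∑' n : ℤ, ENNReal.ofReal (g ((n:ℝ) + b)) with hΦb
  by_cases htop : T = ⊤
  · constructor <;> simp [htop, ENNReal.top_div]
  have hshift : (∑' n : ℤ, ENNReal.ofReal (g ((n:ℝ) + 1 + a))) = Φa := by
    calc (∑' n : ℤ, ENNReal.ofReal (g ((n:ℝ) + 1 + a)))
        = ∑' n : ℤ, ENNReal.ofReal (g (((n + 1 : ℤ):ℝ) + a)) := by
          refine tsum_congr fun n => ?_; push_cast; ring_nf
      _ = Φa := (Equiv.addRight (1:ℤ)).tsum_eq fun n : ℤ => ENNReal.ofReal (g ((n:ℝ) + a))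
  have key : ∀ x y : ℝ, ENNReal.ofReal x ≤ ENNReal.ofReal y + edist x y := by
    intro x y
    rw [edist_dist, Real.dist_eq]
    refine le_trans (ENNReal.ofReal_le_ofReal ?_) ENNReal.ofReal_add_le
    have := le_abs_self (x - y); linarith
  have hdiv : ∀ X Y : ℝ≥0∞, X + X ≤ (Y + Y) + T → X ≤ Y + T / 2 := by
    intro X Y h
    have h2 : 2 * X ≤ 2 * (Y + T / 2) := by
      rw [two_mul, mul_add, ENNReal.mul_div_cancel' (by norm_num) (by norm_num), two_mul]
      exact h
    exact (ENNReal.mul_le_mul_iff_right (by norm_num) (by norm_num)).mp h2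
  constructor
  · refine hdiv _ _ ?_
    calc Φb + Φb = ∑' n : ℤ, (ENNReal.ofReal (g ((n:ℝ) + b)) + ENNReal.ofReal (g ((n:ℝ) + b))) :=
          ENNReal.tsum_add.symm
      _ ≤ ∑' n : ℤ, ((ENNReal.ofReal (g ((n:ℝ) + a)) + ENNReal.ofReal (g ((n:ℝ) + 1 + a))) +
            (edist (g ((n:ℝ) + b)) (g ((n:ℝ) + a)) + edist (g ((n:ℝ) + 1 + a)) (g ((n:ℝ) + b)))) := by
          refine ENNReal.tsum_le_tsum fun n => ?_
          have h1 := key (g ((n:ℝ) + b)) (g ((n:ℝ) + a))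
          have h2 := key (g ((n:ℝ) + b)) (g ((n:ℝ) + 1 + a))
          rw [edist_comm] at h2
          calc ENNReal.ofReal (g ((n:ℝ) + b)) + ENNReal.ofReal (g ((n:ℝ) + b))
              ≤ (ENNReal.ofReal (g ((n:ℝ) + a)) + edist (g ((n:ℝ) + b)) (g ((n:ℝ) + a))) +
                (ENNReal.ofReal (g ((n:ℝ) + 1 + a)) + edist (g ((n:ℝ) + 1 + a)) (g ((n:ℝ) + b))) :=
                add_le_add h1 h2
            _ = _ := add_add_add_comm _ _ _ _
      _ = (Φa + ∑' n : ℤ, ENNReal.ofReal (g ((n:ℝ) + 1 + a))) +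
            ∑' n : ℤ, (edist (g ((n:ℝ) + b)) (g ((n:ℝ) + a)) +
              edist (g ((n:ℝ) + 1 + a)) (g ((n:ℝ) + b))) := by
          rw [ENNReal.tsum_add, ENNReal.tsum_add]
      _ ≤ (Φa + Φa) + T := by rw [hshift]; exact add_le_add_right (pair_edist_tsum_le g hab hba) _
  · refine hdiv _ _ ?_
    calc Φa + Φa = Φa + ∑' n : ℤ, ENNReal.ofReal (g ((n:ℝ) + 1 + a)) := by rw [hshift]
      _ = ∑' n : ℤ, (ENNReal.ofReal (g ((n:ℝ) + a)) + ENNReal.ofReal (g ((n:ℝ) + 1 + a))) :=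
          ENNReal.tsum_add.symm
      _ ≤ ∑' n : ℤ, ((ENNReal.ofReal (g ((n:ℝ) + b)) + ENNReal.ofReal (g ((n:ℝ) + b))) +
            (edist (g ((n:ℝ) + b)) (g ((n:ℝ) + a)) + edist (g ((n:ℝ) + 1 + a)) (g ((n:ℝ) + b)))) := by
          refine ENNReal.tsum_le_tsum fun n => ?_
          have h1 := key (g ((n:ℝ) + a)) (g ((n:ℝ) + b))
          rw [edist_comm] at h1
          have h2 := key (g ((n:ℝ) + 1 + a)) (g ((n:ℝ) + b))
          calc ENNReal.ofReal (g ((n:ℝ) + a)) + ENNReal.ofReal (g ((n:ℝ) + 1 + a))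
              ≤ (ENNReal.ofReal (g ((n:ℝ) + b)) + edist (g ((n:ℝ) + b)) (g ((n:ℝ) + a))) +
                (ENNReal.ofReal (g ((n:ℝ) + b)) + edist (g ((n:ℝ) + 1 + a)) (g ((n:ℝ) + b))) :=
                add_le_add h1 h2
            _ = _ := add_add_add_comm _ _ _ _
      _ = (Φb + Φb) +
            ∑' n : ℤ, (edist (g ((n:ℝ) + b)) (g ((n:ℝ) + a)) +
              edist (g ((n:ℝ) + 1 + a)) (g ((n:ℝ) + b))) := by
          rw [ENNReal.tsum_add, ENNReal.tsum_add]
      _ ≤ (Φb + Φb) + T := add_le_add_right (pair_edist_tsum_le g hab hba) _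

private lemma Phi_integral_one (g : ℝ → ℝ) (hg_int : Integrable g) (hg_nonneg : ∀ y, 0 ≤ g y)
    (hg_one : ∫ y, g y = 1) :
    ∫⁻ u in Ioo (0:ℝ) 1, ∑' n : ℤ, ENNReal.ofReal (g ((n:ℝ) + u)) = 1 := by
  have hmp : ∀ n : ℤ, MeasurePreserving (fun u : ℝ => (n:ℝ) + u) volume volume :=
    fun n => measurePreserving_add_left volume (n:ℝ)
  have hmeas : ∀ n : ℤ, AEMeasurable (fun u : ℝ => ENNReal.ofReal (g ((n:ℝ) + u)))
      (volume.restrict (Ioo (0:ℝ) 1)) := by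
    intro n
    have : AEMeasurable (fun u : ℝ => g ((n:ℝ) + u)) volume :=
      hg_int.aemeasurable.comp_quasiMeasurePreserving (hmp n).quasiMeasurePreserving
    exact this.ennreal_ofReal.restrict
  have hchange : ∀ n : ℤ, ∫⁻ u in Ioo (0:ℝ) 1, ENNReal.ofReal (g ((n:ℝ) + u))
      = ∫⁻ y in Ioo (n:ℝ) (n+1), ENNReal.ofReal (g y) := by
    intro n
    have hpre : (fun u : ℝ => (n:ℝ) + u) ⁻¹' Ioo (n:ℝ) (n+1) = Ioo 0 1 := by
      ext x
      simp only [mem_preimage, mem_Ioo]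
      constructor <;> rintro ⟨h1, h2⟩ <;> constructor <;> linarith
    have hmp' : MeasurePreserving (fun u : ℝ => (n:ℝ) + u)
        (volume.restrict (Ioo (0:ℝ) 1)) (volume.restrict (Ioo (n:ℝ) (n+1))) := by
      have := (hmp n).restrict_preimage (measurableSet_Ioo (a := (n:ℝ)) (b := n+1))
      rwa [hpre] at this
    exact hmp'.lintegral_comp_emb
      (MeasurableEquiv.addLeft (n:ℝ)).measurableEmbedding (fun y => ENNReal.ofReal (g y))
  calc ∫⁻ u in Ioo (0:ℝ) 1, ∑' n : ℤ, ENNReal.ofReal (g ((n:ℝ) + u))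
      = ∑' n : ℤ, ∫⁻ u in Ioo (0:ℝ) 1, ENNReal.ofReal (g ((n:ℝ) + u)) := lintegral_tsum hmeas
    _ = ∑' n : ℤ, ∫⁻ y in Ioo (n:ℝ) (n+1), ENNReal.ofReal (g y) := tsum_congr hchange
    _ = ∫⁻ y in ⋃ n : ℤ, Ioo (n:ℝ) (n+1), ENNReal.ofReal (g y) :=
        (lintegral_iUnion (fun n => measurableSet_Ioo)
          (fun m n hmn => by
            simp only [Function.onFun]
            rw [Set.Ioo_disjoint_Ioo]
            rcases lt_or_gt_of_ne hmn with h | h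
            · exact le_trans (min_le_left _ _) (le_trans (by exact_mod_cast h) (le_max_right _ _))
            · exact le_trans (min_le_right _ _) (le_trans (by exact_mod_cast h) (le_max_left _ _))
            ) _).symm
    _ = ∫⁻ y, ENNReal.ofReal (g y) := by
        refine setLIntegral_congr ?_ |>.trans (by rw [Measure.restrict_univ])
        rw [ae_eq_univ]
        refine measure_mono_null (fun y hy => ?_) ((Set.countable_range ((↑) : ℤ → ℝ)).measure_zero volume)
        simp only [mem_compl_iff, mem_iUnion, mem_Ioo, not_exists, not_and] at hy
        have h1 := Int.floor_le y
        have h2 := Int.lt_floor_add_one y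
        have h3 := hy ⌊y⌋
        refine ⟨⌊y⌋, ?_⟩
        by_contra hne
        exact (h3 (lt_of_le_of_ne h1 hne)) h2
    _ = ENNReal.ofReal (∫ y, g y) :=
        (ofReal_integral_eq_lintegral_ofReal hg_int (Filter.Eventually.of_forall hg_nonneg)).symm
    _ = 1 := by rw [hg_one, ENNReal.ofReal_one]

/-- Dümbgen–Leuenberger: the stacked density `ḡ` deviates from `1` by at most `TV(g)/2`. -/
theorem stacked_density_dist_one_le
    (g : ℝ → ℝ) (hg_nonneg : ∀ y, 0 ≤ g y)
    (hg_int : Integrable g)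
    (hg_one : ∫ y, g y = 1)
    (hTV : eVariationOn g univ ≠ ⊤) :
    ∀ z ∈ Icc (0 : ℝ) 1,
      |(∑' n : ℤ, g (n + z)) - 1| ≤ (eVariationOn g univ).toReal / 2 := by
  intro z hz
  set T := eVariationOn g univ with hTdef
  set Φ : ℝ → ℝ≥0∞ := fun x => ∑' n : ℤ, ENNReal.ofReal (g ((n:ℝ) + x)) with hΦ
  have hint : ∫⁻ u in Ioo (0:ℝ) 1, Φ u = 1 := Phi_integral_one g hg_int hg_nonneg hg_one
  have hT2 : T / 2 ≠ ⊤ := by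
    rw [Ne, ENNReal.div_eq_top]
    simp [hTV]
  have hosc : ∀ u ∈ Ioo (0:ℝ) 1, Φ z ≤ Φ u + T / 2 ∧ Φ u ≤ Φ z + T / 2 := by
    intro u hu
    rcases le_total z u with h | h
    · have := Phi_osc g h (by linarith [hz.1, hu.2] : u ≤ z + 1)
      exact ⟨this.2, this.1⟩
    · have := Phi_osc g h (by linarith [hu.1, hz.2] : z ≤ u + 1)
      exact ⟨this.1, this.2⟩
  have hub : Φ z ≤ 1 + T / 2 := by
    rw [← tsub_le_iff_right]
    calc Φ z - T/2 = (Φ z - T/2) * volume (Ioo (0:ℝ) 1) := by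
          simp [Real.volume_Ioo]
      _ = ∫⁻ _ in Ioo (0:ℝ) 1, (Φ z - T/2) := (setLIntegral_const _ _).symm
      _ ≤ ∫⁻ u in Ioo (0:ℝ) 1, Φ u :=
          setLIntegral_mono' measurableSet_Ioo
            (fun u hu => tsub_le_iff_right.mpr ((hosc u hu).1))
      _ = 1 := hint
  have hΦfin : Φ z ≠ ⊤ := by
    intro h
    rw [h] at hub
    exact (ENNReal.add_ne_top.mpr ⟨ENNReal.one_ne_top, hT2⟩) (top_le_iff.mp hub)
  have hlb : (1 : ℝ≥0∞) ≤ Φ z + T / 2 := by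
    calc (1:ℝ≥0∞) = ∫⁻ u in Ioo (0:ℝ) 1, Φ u := hint.symm
      _ ≤ ∫⁻ _ in Ioo (0:ℝ) 1, (Φ z + T/2) :=
          setLIntegral_mono' measurableSet_Ioo (fun u hu => (hosc u hu).2)
      _ = Φ z + T/2 := by simp [setLIntegral_const, Real.volume_Ioo]
  have htsum : (∑' n : ℤ, g ((n:ℝ) + z)) = (Φ z).toReal := by
    rw [hΦ]
    rw [ENNReal.tsum_toReal_eq (fun n => ENNReal.ofReal_ne_top)]
    exact tsum_congr fun n => (ENNReal.toReal_ofReal (hg_nonneg _)).symm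
  rw [htsum]
  have h2 : (T/2).toReal = T.toReal / 2 := by simp [ENNReal.toReal_div]
  rw [abs_le]
  constructor
  · have h3 := ENNReal.toReal_mono (ENNReal.add_ne_top.mpr ⟨hΦfin, hT2⟩) hlb
    rw [ENNReal.toReal_add hΦfin hT2, ENNReal.toReal_one, h2] at h3
    linarith
  · have h3 := ENNReal.toReal_mono (ENNReal.add_ne_top.mpr ⟨ENNReal.one_ne_top, hT2⟩) hub
    rw [ENNReal.toReal_add ENNReal.one_ne_top hT2, ENNReal.toReal_one, h2] at h3
    linarith
end

section
/- Let g be a probability density on ℝ with finite total variation TV(g), and let Ḡ be the cumulative distribution function on [0,1] of the fractional part of a random variable with density g. Then for all 0 ≤ z₁ < z₂ ≤ 1, |(Ḡ(z₂) − Ḡ(z₁)) − (z₂ − z₁)| ≤ (z₂−z₁)(1−(z₂−z₁))·TV(g)/2. -/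
open Set MeasureTheory Filter Topology


lemma chain_sum_le (g : ℝ → ℝ) (hTV : eVariationOn g univ ≠ ⊤)
    {p : ℕ → ℝ} (hp : Monotone p) (n : ℕ) :
    ∑ i ∈ Finset.range n, |g (p (i+1)) - g (p i)| ≤ (eVariationOn g univ).toReal := by
  have h := eVariationOn.sum_le (f := g) (n := n) hp (fun i => mem_univ _)
  rw [← ENNReal.ofReal_le_iff_le_toReal hTV, ENNReal.ofReal_sum_of_nonneg
    (fun i _ => abs_nonneg _)]
  refine le_trans (le_of_eq ?_) h
  refine Finset.sum_congr rfl fun i _ => ?_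
  rw [edist_dist, Real.dist_eq]

lemma exists_point_le (g : ℝ → ℝ) (hg_int : Integrable g)
    (a : ℝ) {ε : ℝ} (hε : 0 < ε) :
    ∃ y ∈ Ioo a (a+1), g y ≤ (∫ x in Ioc a (a+1), g x) + ε := by
  by_contra h
  push_neg at h
  set c := (∫ x in Ioc a (a+1), g x) + ε with hc
  have hmono : ∫ x in Ioo a (a+1), (fun _ => c) x ≤ ∫ x in Ioo a (a+1), g x := by
    apply setIntegral_mono_on (integrableOn_const (by simp [Real.volume_Ioo]))
      (hg_int.integrableOn) measurableSet_Ioo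
    intro x hx
    exact (h x hx).le
  rw [setIntegral_const] at hmono
  simp [Real.volume_Ioo] at hmono
  rw [← integral_Ioc_eq_integral_Ioo] at hmono
  linarith

lemma run_sum_le (g : ℝ → ℝ) (hg_nonneg : ∀ y, 0 ≤ g y) (hg_int : Integrable g)
    (hg_one : ∫ y, g y = 1) (hTV : eVariationOn g univ ≠ ⊤)
    (u : ℝ) (a : ℤ) (M : ℕ) :
    ∑ k ∈ Finset.range M, g ((a + k : ℤ) + u) ≤ 1 + (eVariationOn g univ).toReal := by
  set V := (eVariationOn g univ).toReal
  rcases Nat.eq_zero_or_pos M with hM | hM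
  · subst hM
    simp
    positivity
  refine le_of_forall_pos_le_add fun ε hε => ?_
  set c : ℕ → ℝ := fun k => (a + k : ℤ) + u with hcdef
  have hcsucc : ∀ k, c (k+1) = c k + 1 := by
    intro k; simp [hcdef]; push_cast; ring
  have hεM : 0 < ε / M := by positivity
  have hy : ∀ k : ℕ, ∃ y ∈ Ioo (c k) (c k + 1),
      g y ≤ (∫ x in Ioc (c k) (c k + 1), g x) + ε / M :=
    fun k => exists_point_le g hg_int (c k) hεM
  choose y hy1 hy2 using hy
  -- monotone chain
  set p : ℕ → ℝ := fun i => if Even i then c (i / 2) else y (i / 2) with hpdef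
  have hp : Monotone p := by
    apply monotone_nat_of_le_succ
    intro i
    by_cases he : Even i
    · have h2 : ¬ Even (i+1) := by simp [Nat.even_add_one, he]
      obtain ⟨r, rfl⟩ := he
      have : (r + r + 1)/2 = (r + r)/2 := by omega
      simp only [hpdef, if_pos (Even.add_self r), if_neg h2, this]
      exact (hy1 ((r+r)/2)).1.le
    · have h2 : Even (i+1) := by simpa [Nat.even_add_one] using he
      have hmod : i % 2 = 1 := Nat.not_even_iff.mp he
      have hq : (i+1)/2 = i/2 + 1 := by omega
      simp only [hpdef, if_neg he, if_pos h2, hq, hcsucc]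
      exact (hy1 (i/2)).2.le
  have hchain := chain_sum_le g hTV hp (2*M)
  -- even terms
  have heven : ∀ k, |g (c k) - g (y k)| = |g (p (2*k+1)) - g (p (2*k))| := by
    intro k
    have h1 : ¬ Even (2*k+1) := by simp [Nat.even_add_one]
    have h2 : Even (2*k) := even_two_mul k
    have e1 : (2*k+1)/2 = k := by omega
    have e2 : (2*k)/2 = k := by omega
    rw [hpdef]; simp only [if_neg h1, if_pos h2, e1, e2]
    rw [abs_sub_comm]
  have hsub : ∑ k ∈ Finset.range M, |g (c k) - g (y k)| ≤ V := by
    calc ∑ k ∈ Finset.range M, |g (c k) - g (y k)|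
        = ∑ i ∈ (Finset.range M).image (fun k => 2*k),
            |g (p (i+1)) - g (p i)| := by
          rw [Finset.sum_image (by intro x _ y _ h; simp only at h; omega)]
          exact Finset.sum_congr rfl fun k _ => heven k
      _ ≤ ∑ i ∈ Finset.range (2*M), |g (p (i+1)) - g (p i)| := by
          apply Finset.sum_le_sum_of_subset_of_nonneg
          · intro i hi
            simp only [Finset.mem_image, Finset.mem_range] at hi ⊢
            omega
          · intro i _ _; exact abs_nonneg _
      _ ≤ V := hchain
  -- integral sum
  have hdisj : ∀ k ∈ Finset.range M, ∀ j ∈ Finset.range M, k ≠ j →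
      Disjoint (Ioc (c k) (c k + 1)) (Ioc (c j) (c j + 1)) := by
    intro k _ j _ hkj
    rw [Set.Ioc_disjoint_Ioc]
    rcases Nat.lt_or_ge k j with h | h
    · have : c k + 1 ≤ c j := by
        simp only [hcdef]; push_cast
        have : (k:ℝ) + 1 ≤ j := by exact_mod_cast h
        linarith
      exact le_trans (min_le_left _ _) (le_trans this (le_max_right _ _))
    · have hj : j < k := by omega
      have : c j + 1 ≤ c k := by
        simp only [hcdef]; push_cast
        have : (j:ℝ) + 1 ≤ k := by exact_mod_cast hj
        linarith
      exact le_trans (min_le_right _ _) (le_trans this (le_max_left _ _))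
  have hint : ∑ k ∈ Finset.range M, ∫ x in Ioc (c k) (c k + 1), g x ≤ 1 := by
    rw [← integral_biUnion_finset (Finset.range M) (fun k _ => measurableSet_Ioc)
      hdisj (fun k _ => hg_int.integrableOn)]
    rw [← hg_one]
    exact setIntegral_le_integral hg_int (Eventually.of_forall hg_nonneg)
  -- combine
  have hbound : ∀ k ∈ Finset.range M, g (c k) ≤
      (∫ x in Ioc (c k) (c k + 1), g x) + ε/M + |g (c k) - g (y k)| := by
    intro k _
    have := hy2 k
    have habs : g (c k) - g (y k) ≤ |g (c k) - g (y k)| := le_abs_self _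
    linarith
  calc ∑ k ∈ Finset.range M, g ((a + k : ℤ) + u)
      = ∑ k ∈ Finset.range M, g (c k) := rfl
    _ ≤ ∑ k ∈ Finset.range M, ((∫ x in Ioc (c k) (c k + 1), g x) + ε/M
          + |g (c k) - g (y k)|) := Finset.sum_le_sum hbound
    _ = (∑ k ∈ Finset.range M, ∫ x in Ioc (c k) (c k + 1), g x)
          + M * (ε/M) + ∑ k ∈ Finset.range M, |g (c k) - g (y k)| := by
        rw [Finset.sum_add_distrib, Finset.sum_add_distrib, Finset.sum_const,
          Finset.card_range, nsmul_eq_mul]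
    _ ≤ 1 + M * (ε/M) + V := by linarith
    _ = 1 + V + ε := by
        field_simp
        ring

lemma sum_Icc_eq_range (f : ℤ → ℝ) (N : ℕ) :
    ∑ n ∈ Finset.Icc (-(N:ℤ)) N, f n
      = ∑ k ∈ Finset.range (2*N+1), f (-(N:ℤ) + k) := by
  rw [show Finset.Icc (-(N:ℤ)) N = (Finset.range (2*N+1)).image (fun k : ℕ => -(N:ℤ) + k) by
    ext n
    simp only [Finset.mem_Icc, Finset.mem_image, Finset.mem_range]
    constructor
    · intro ⟨h1, h2⟩
      exact ⟨(n + N).toNat, by omega, by omega⟩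
    · rintro ⟨k, hk, rfl⟩; omega]
  rw [Finset.sum_image (by intro x _ y _ h; simp only at h; omega)]

lemma finset_sum_shift_le (g : ℝ → ℝ) (hg_nonneg : ∀ y, 0 ≤ g y) (hg_int : Integrable g)
    (hg_one : ∫ y, g y = 1) (hTV : eVariationOn g univ ≠ ⊤)
    (u : ℝ) (F : Finset ℤ) :
    ∑ n ∈ F, g (n + u) ≤ 1 + (eVariationOn g univ).toReal := by
  obtain ⟨N, hN⟩ : ∃ N : ℕ, F ⊆ Finset.Icc (-(N:ℤ)) N := by
    refine ⟨F.sup (fun n => n.natAbs), fun n hn => ?_⟩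
    have h : n.natAbs ≤ F.sup (fun n => n.natAbs) := Finset.le_sup hn
    simp only [Finset.mem_Icc]; omega
  calc ∑ n ∈ F, g (n + u) ≤ ∑ n ∈ Finset.Icc (-(N:ℤ)) N, g (n + u) :=
        Finset.sum_le_sum_of_subset_of_nonneg hN (fun n _ _ => hg_nonneg _)
    _ = ∑ k ∈ Finset.range (2*N+1), g ((-(N:ℤ) + k : ℤ) + u) := by
        rw [sum_Icc_eq_range (fun n => g (n + u)) N]
    _ ≤ 1 + (eVariationOn g univ).toReal :=
        run_sum_le g hg_nonneg hg_int hg_one hTV u (-(N:ℤ)) (2*N+1)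

lemma shift_summable (g : ℝ → ℝ) (hg_nonneg : ∀ y, 0 ≤ g y) (hg_int : Integrable g)
    (hg_one : ∫ y, g y = 1) (hTV : eVariationOn g univ ≠ ⊤) (u : ℝ) :
    Summable (fun n : ℤ => g (n + u)) :=
  summable_of_sum_le (fun n => hg_nonneg _)
    (fun F => finset_sum_shift_le g hg_nonneg hg_int hg_one hTV u F)

lemma gbar_le (g : ℝ → ℝ) (hg_nonneg : ∀ y, 0 ≤ g y) (hg_int : Integrable g)
    (hg_one : ∫ y, g y = 1) (hTV : eVariationOn g univ ≠ ⊤) (u : ℝ) :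
    ∑' n : ℤ, g (n + u) ≤ 1 + (eVariationOn g univ).toReal :=
  Summable.tsum_le_of_sum_le (shift_summable g hg_nonneg hg_int hg_one hTV u)
    (fun F => finset_sum_shift_le g hg_nonneg hg_int hg_one hTV u F)

lemma gbar_nonneg (g : ℝ → ℝ) (hg_nonneg : ∀ y, 0 ≤ g y) (u : ℝ) :
    0 ≤ ∑' n : ℤ, g (n + u) :=
  tsum_nonneg (fun n => hg_nonneg _)

lemma gbar_periodic (g : ℝ → ℝ) (u : ℝ) :
    ∑' n : ℤ, g (n + (u + 1)) = ∑' n : ℤ, g (n + u) := by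
  have h : ∀ n : ℤ, g (n + (u+1)) = (fun m : ℤ => g (m + u)) (n + 1) := by
    intro n; simp only []; push_cast; ring_nf
  rw [tsum_congr h]
  exact (Equiv.addRight (1:ℤ)).tsum_eq (fun m : ℤ => g (m + u))

-- core oscillation bound, for v < u < v+1
lemma gbar_osc_core (g : ℝ → ℝ) (hg_nonneg : ∀ y, 0 ≤ g y) (hg_int : Integrable g)
    (hg_one : ∫ y, g y = 1) (hTV : eVariationOn g univ ≠ ⊤)
    {u v : ℝ} (hvu : v < u) (huv : u < v + 1) :
    (∑' n : ℤ, g (n + u)) - (∑' n : ℤ, g (n + v))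
      ≤ (eVariationOn g univ).toReal / 2 := by
  set V := (eVariationOn g univ).toReal with hV
  set Su := ∑' n : ℤ, g (n + u) with hSu
  set Sv := ∑' n : ℤ, g (n + v) with hSv
  have hsum_u := shift_summable g hg_nonneg hg_int hg_one hTV u
  have hsum_v := shift_summable g hg_nonneg hg_int hg_one hTV v
  have key : ∀ ε > 0, Su - Sv ≤ V / 2 + 3 * ε / 2 := by
    intro ε hε
    -- choose F₀ capturing most of Su
    have htend := hsum_u.hasSum
    rw [HasSum] at htend
    have hev := htend.eventually (lt_mem_nhds (show Su - ε < Su by linarith))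
    obtain ⟨F₀, hF₀⟩ := eventually_atTop.mp hev
    obtain ⟨N₁, hN₁⟩ : ∃ N : ℕ, F₀ ⊆ Finset.Icc (-(N:ℤ)) N := by
      refine ⟨F₀.sup (fun n => n.natAbs), fun n hn => ?_⟩
      have h : n.natAbs ≤ F₀.sup (fun n => n.natAbs) := Finset.le_sup hn
      simp only [Finset.mem_Icc]; omega
    -- tail smallness
    have hnat : Summable (fun n : ℕ => g ((n : ℤ) + u)) :=
      hsum_u.comp_injective (fun a b h => by exact_mod_cast h)
    have htail := hnat.tendsto_atTop_zero
    obtain ⟨N₂, hN₂⟩ := (Metric.tendsto_atTop.mp htail) ε hε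
    set N := max N₁ N₂ with hN
    -- setup points
    set c : ℕ → ℝ := fun k => ((-(N:ℤ) + k : ℤ) : ℝ) with hcdef
    have hcsucc : ∀ k, c (k+1) = c k + 1 := by
      intro k; simp only [hcdef]; push_cast; ring
    set x : ℕ → ℝ := fun k => c k + u with hxdef
    set w : ℕ → ℝ := fun k => c k + v with hwdef
    set p : ℕ → ℝ := fun i => if Even i then w (i / 2) else x (i / 2) with hpdef
    have hp : Monotone p := by
      apply monotone_nat_of_le_succ
      intro i
      by_cases he : Even i
      · have h2 : ¬ Even (i+1) := by simp [Nat.even_add_one, he]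
        obtain ⟨r, rfl⟩ := he
        have hq : (r + r + 1)/2 = (r + r)/2 := by omega
        simp only [hpdef, if_pos (Even.add_self r), if_neg h2, hq, hxdef, hwdef]
        linarith
      · have h2 : Even (i+1) := by simpa [Nat.even_add_one] using he
        have hmod : i % 2 = 1 := Nat.not_even_iff.mp he
        have hq : (i+1)/2 = i/2 + 1 := by omega
        simp only [hpdef, if_neg he, if_pos h2, hq, hxdef, hwdef, hcsucc]
        linarith
    -- signed chain terms
    set s : ℕ → ℝ := fun i =>
      if Even i then g (x (i / 2)) - g (w (i / 2)) else g (x (i / 2)) - g (w (i / 2 + 1))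
      with hsdef
    have hs_le : ∀ i, s i ≤ |g (p (i+1)) - g (p i)| := by
      intro i
      by_cases he : Even i
      · have h2 : ¬ Even (i+1) := by simp [Nat.even_add_one, he]
        have hq : (i+1)/2 = i/2 := by
          obtain ⟨r, rfl⟩ := he; omega
        simp only [hsdef, hpdef, if_pos he, if_neg h2, hq]
        exact le_abs_self _
      · have h2 : Even (i+1) := by simpa [Nat.even_add_one] using he
        have hmod : i % 2 = 1 := Nat.not_even_iff.mp he
        have hq : (i+1)/2 = i/2 + 1 := by omega
        simp only [hsdef, hpdef, if_neg he, if_pos h2, hq]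
        rw [abs_sub_comm]
        exact le_abs_self _
    -- identity by induction
    have hid : ∀ m : ℕ, ∑ i ∈ Finset.range (2*m+1), s i
        = 2 * (∑ k ∈ Finset.range (m+1), (g (x k) - g (w k))) + g (w 0) - g (x m) := by
      intro m
      induction m with
      | zero =>
        simp [hsdef]
        ring
      | succ m ih =>
        have h1 : 2*(m+1)+1 = (2*m+1) + 1 + 1 := by ring
        rw [h1, Finset.sum_range_succ, Finset.sum_range_succ, ih]
        conv_rhs => rw [Finset.sum_range_succ]
        have e1 : ¬ Even (2*m+1) := by simp [Nat.even_add_one]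
        have e2 : Even (2*m+1+1) := by simp [Nat.even_add_one]
        have q1 : (2*m+1)/2 = m := by omega
        have q2 : (2*m+1+1)/2 = m+1 := by omega
        simp only [hsdef, if_neg e1, if_pos e2, q1, q2]
        ring
    -- chain bound
    have hchain : ∑ i ∈ Finset.range (2*(2*N)+1), s i ≤ V := by
      calc ∑ i ∈ Finset.range (2*(2*N)+1), s i
          ≤ ∑ i ∈ Finset.range (2*(2*N)+1), |g (p (i+1)) - g (p i)| :=
            Finset.sum_le_sum (fun i _ => hs_le i)
        _ ≤ V := chain_sum_le g hTV hp _
    have hid2N := hid (2*N)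
    -- lower bound for sum over x
    have hxsum : Su - ε < ∑ k ∈ Finset.range (2*N+1), g (x k) := by
      have hsub : F₀ ⊆ Finset.Icc (-(N:ℤ)) N := by
        refine hN₁.trans (Finset.Icc_subset_Icc ?_ ?_) <;>
          simp only [hN] <;> omega
      have := hF₀ _ hsub
      calc Su - ε < ∑ n ∈ Finset.Icc (-(N:ℤ)) N, g (n + u) := this
        _ = ∑ k ∈ Finset.range (2*N+1), g (x k) :=
          sum_Icc_eq_range (fun n : ℤ => g (n + u)) N
    have hwsum : ∑ k ∈ Finset.range (2*N+1), g (w k) ≤ Sv := by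
      rw [← sum_Icc_eq_range (fun n : ℤ => g (n + v)) N]
      exact Summable.sum_le_tsum _ (fun n _ => hg_nonneg _) hsum_v
    -- tail bound
    have hxtail : g (x (2*N)) < ε := by
      have hNN : N ≥ N₂ := le_max_right _ _
      have := hN₂ N hNN
      rw [Real.dist_eq, sub_zero, abs_of_nonneg (hg_nonneg _)] at this
      have hxeq : x (2*N) = ((N:ℤ):ℝ) + u := by
        simp only [hxdef, hcdef]
        push_cast; ring
      rw [hxeq]
      exact_mod_cast this
    have hw0 : 0 ≤ g (w 0) := hg_nonneg _
    have h2sum : 2 * (∑ k ∈ Finset.range (2*N+1), (g (x k) - g (w k))) ≤ V + ε := by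
      have : 2 * (∑ k ∈ Finset.range (2*N+1), (g (x k) - g (w k)))
          = (∑ i ∈ Finset.range (2*(2*N)+1), s i) - g (w 0) + g (x (2*N)) := by
        rw [hid2N]; ring
      rw [this]; linarith
    have hsplit : ∑ k ∈ Finset.range (2*N+1), (g (x k) - g (w k))
        = (∑ k ∈ Finset.range (2*N+1), g (x k)) - ∑ k ∈ Finset.range (2*N+1), g (w k) :=
      Finset.sum_sub_distrib _ _
    rw [hsplit] at h2sum
    linarith
  refine le_of_forall_pos_le_add fun ε hε => ?_
  have := key (2*ε/3) (by linarith)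
  linarith

lemma gbar_aemeasurable (g : ℝ → ℝ) (hg_nonneg : ∀ y, 0 ≤ g y) (hg_int : Integrable g) :
    AEMeasurable (fun u : ℝ => ∑' n : ℤ, g (n + u)) volume := by
  have hae : ∀ n : ℤ, AEMeasurable (fun u : ℝ => g ((n:ℝ) + u)) volume := by
    intro n
    exact hg_int.aemeasurable.comp_quasiMeasurePreserving
      (measurePreserving_add_left volume (n:ℝ)).quasiMeasurePreserving
  have h1 : AEMeasurable (fun u : ℝ => ∑' n : ℤ, (g ((n:ℝ) + u)).toNNReal) volume :=
    AEMeasurable.nnreal_tsum (fun n => (measurable_real_toNNReal).comp_aemeasurable (hae n))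
  have h2 := h1.coe_nnreal_real
  refine h2.congr (Eventually.of_forall fun u => ?_)
  show (↑(∑' (n:ℤ), (g (↑n + u)).toNNReal) : ℝ) = ∑' (n:ℤ), g (↑n + u)
  rw [NNReal.coe_tsum]
  exact tsum_congr fun n => Real.coe_toNNReal _ (hg_nonneg _)

lemma shift_setIntegral (g : ℝ → ℝ) (hg_int : Integrable g) (n : ℤ) :
    ∫ u in Ioc (0:ℝ) 1, g ((n:ℝ) + u) = ∫ x in Ioc (n:ℝ) (n+1), g x := by
  have hmp : MeasurePreserving (fun x : ℝ => (n:ℝ) + x) volume volume :=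
    measurePreserving_add_left volume (n:ℝ)
  have hemb : MeasurableEmbedding (fun x : ℝ => (n:ℝ) + x) :=
    (MeasurableEquiv.addLeft (n:ℝ)).measurableEmbedding
  have hpre : (fun x : ℝ => (n:ℝ) + x) ⁻¹' (Ioc (n:ℝ) (n+1)) = Ioc (0:ℝ) 1 := by
    ext x; simp only [mem_preimage, mem_Ioc]
    constructor <;> intro h <;> constructor <;> linarith [h.1, h.2]
  rw [← hpre]
  exact hmp.setIntegral_preimage_emb hemb g _

lemma shift_setLIntegral (g : ℝ → ℝ) (n : ℤ) :
    ∫⁻ u in Ioc (0:ℝ) 1, ‖g ((n:ℝ) + u)‖₊ = ∫⁻ x in Ioc (n:ℝ) (n+1), ‖g x‖₊ := by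
  have hmp : MeasurePreserving (fun x : ℝ => (n:ℝ) + x) volume volume :=
    measurePreserving_add_left volume (n:ℝ)
  have hemb : MeasurableEmbedding (fun x : ℝ => (n:ℝ) + x) :=
    (MeasurableEquiv.addLeft (n:ℝ)).measurableEmbedding
  have hpre : (fun x : ℝ => (n:ℝ) + x) ⁻¹' (Ioc (n:ℝ) (n+1)) = Ioc (0:ℝ) 1 := by
    ext x; simp only [mem_preimage, mem_Ioc]
    constructor <;> intro h <;> constructor <;> linarith [h.1, h.2]
  rw [← hpre]
  exact hmp.setLIntegral_comp_preimage_emb hemb (fun x => (‖g x‖₊ : ENNReal)) _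

lemma gbar_integral_one (g : ℝ → ℝ) (hg_nonneg : ∀ y, 0 ≤ g y) (hg_int : Integrable g)
    (hg_one : ∫ y, g y = 1) :
    ∫ u in Ioc (0:ℝ) 1, ∑' n : ℤ, g ((n:ℝ) + u) = 1 := by
  have hdisj : Pairwise (Function.onFun Disjoint (fun n : ℤ => Ioc (n:ℝ) (n+1))) := by
    intro m n hmn
    simp only [Function.onFun]
    rw [Set.Ioc_disjoint_Ioc]
    rcases lt_or_gt_of_ne hmn with h | h
    · have : (m:ℝ) + 1 ≤ n := by exact_mod_cast h
      exact le_trans (min_le_left _ _) (le_trans this (le_max_right _ _))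
    · have : (n:ℝ) + 1 ≤ m := by exact_mod_cast h
      exact le_trans (min_le_right _ _) (le_trans this (le_max_left _ _))
  have hmeas : ∀ n : ℤ, MeasurableSet (Ioc (n:ℝ) (n+1)) := fun n => measurableSet_Ioc
  have hUnion : ⋃ n : ℤ, Ioc (n:ℝ) (n+1) = univ := iUnion_Ioc_intCast ℝ
  have hsm : ∀ n : ℤ, AEStronglyMeasurable (fun u : ℝ => g ((n:ℝ) + u))
      (volume.restrict (Ioc (0:ℝ) 1)) := by
    intro n
    exact (hg_int.aemeasurable.comp_quasiMeasurePreserving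
      (measurePreserving_add_left volume (n:ℝ)).quasiMeasurePreserving).aestronglyMeasurable.restrict
  have hfin : ∑' n : ℤ, ∫⁻ u in Ioc (0:ℝ) 1, ‖g ((n:ℝ) + u)‖₊ ≠ ⊤ := by
    have : ∀ n : ℤ, ∫⁻ u in Ioc (0:ℝ) 1, ‖g ((n:ℝ) + u)‖₊ = ∫⁻ x in Ioc (n:ℝ) (n+1), ‖g x‖₊ :=
      shift_setLIntegral g
    rw [tsum_congr this, ← lintegral_iUnion hmeas hdisj, hUnion]
    simp only [Measure.restrict_univ]
    exact hg_int.2.ne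
  rw [integral_tsum hsm hfin]
  have h2 : ∀ n : ℤ, ∫ u in Ioc (0:ℝ) 1, g ((n:ℝ) + u) = ∫ x in Ioc (n:ℝ) (n+1), g x :=
    shift_setIntegral g hg_int
  rw [tsum_congr h2, ← integral_iUnion hmeas hdisj (by rw [hUnion]; exact hg_int.integrableOn),
    hUnion]
  simpa using hg_one

lemma exists_ge_avg {f : ℝ → ℝ} {s : Set ℝ} (hs : MeasurableSet s)
    (hμ : 0 < volume s) (hμ' : volume s ≠ ⊤) (hf : IntegrableOn f s)
    {ε : ℝ} (hε : 0 < ε) :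
    ∃ u ∈ s, ∫ x in s, f x ≤ (f u + ε) * (volume s).toReal := by
  set m := (volume s).toReal with hm
  have hm0 : 0 < m := ENNReal.toReal_pos hμ.ne' hμ'
  by_contra h
  push_neg at h
  have hlt : ∀ u ∈ s, f u < (∫ x in s, f x) / m - ε := by
    intro u hu
    have := h u hu
    rw [lt_sub_iff_add_lt, lt_div_iff₀ hm0]
    exact this
  have hmono : ∫ x in s, f x ≤ ∫ x in s, (fun _ => (∫ x in s, f x) / m - ε) x := by
    apply setIntegral_mono_on hf (integrableOn_const hμ') hs
    intro x hx; exact (hlt x hx).le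
  rw [setIntegral_const, smul_eq_mul, measureReal_def, ← hm, mul_comm] at hmono
  have heq : ((∫ x in s, f x) / m - ε) * m = (∫ x in s, f x) - ε * m := by
    rw [sub_mul, div_mul_cancel₀ _ hm0.ne']
  rw [heq] at hmono
  nlinarith
lemma exists_le_avg {f : ℝ → ℝ} {s : Set ℝ} (hs : MeasurableSet s)
    (hμ : 0 < volume s) (hμ' : volume s ≠ ⊤) (hf : IntegrableOn f s)
    {ε : ℝ} (hε : 0 < ε) :
    ∃ u ∈ s, (f u - ε) * (volume s).toReal ≤ ∫ x in s, f x := by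
  obtain ⟨u, hu, h⟩ := exists_ge_avg hs hμ hμ' hf.neg hε (f := fun x => - f x)
  refine ⟨u, hu, ?_⟩
  rw [integral_neg] at h
  nlinarith [ENNReal.toReal_pos hμ.ne' hμ', h]

lemma gbar_nonneg' (g : ℝ → ℝ) (hg_nonneg : ∀ y, 0 ≤ g y) (u : ℝ) :
    0 ≤ ∑' n : ℤ, g (n + u) := tsum_nonneg (fun n => hg_nonneg _)

lemma key_arith1 (A δ ε a b V : ℝ) (hδ0 : 0 < δ) (hδ1 : δ < 1)
    (h1 : A ≤ (a + ε) * δ) (h2 : (b - ε) * (1 - δ) ≤ 1 - A) (h3 : a - b ≤ V/2) :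
    A - δ ≤ δ * (1 - δ) * (V/2) + 2 * ε * (δ * (1 - δ)) := by
  nlinarith [mul_le_mul_of_nonneg_right h1 (by linarith : (0:ℝ) ≤ 1 - δ),
    mul_le_mul_of_nonneg_right h2 hδ0.le,
    mul_le_mul_of_nonneg_left h3 (mul_pos hδ0 (by linarith : (0:ℝ) < 1-δ)).le]

lemma key_arith2 (A δ ε a b V : ℝ) (hδ0 : 0 < δ) (hδ1 : δ < 1)
    (h1 : (a - ε) * δ ≤ A) (h2 : 1 - A ≤ (b + ε) * (1 - δ)) (h3 : b - a ≤ V/2) :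
    δ - A ≤ δ * (1 - δ) * (V/2) + 2 * ε * (δ * (1 - δ)) := by
  nlinarith [mul_le_mul_of_nonneg_right h1 (by linarith : (0:ℝ) ≤ 1 - δ),
    mul_le_mul_of_nonneg_right h2 hδ0.le,
    mul_le_mul_of_nonneg_left h3 (mul_pos hδ0 (by linarith : (0:ℝ) < 1-δ)).le]

lemma gbar_osc (g : ℝ → ℝ) (hg_nonneg : ∀ y, 0 ≤ g y) (hg_int : Integrable g)
    (hg_one : ∫ y, g y = 1) (hTV : eVariationOn g univ ≠ ⊤)
    {u v : ℝ} (hu : u ∈ Ioc (0:ℝ) 1) (hv : v ∈ Ioc (0:ℝ) 1) :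
    (∑' n : ℤ, g (n + u)) - (∑' n : ℤ, g (n + v))
      ≤ (eVariationOn g univ).toReal / 2 := by
  rcases lt_trichotomy u v with h | h | h
  · have hcore := gbar_osc_core g hg_nonneg hg_int hg_one hTV
      (u := u + 1) (v := v) (by linarith [hu.1, hv.2]) (by linarith)
    rwa [gbar_periodic g u] at hcore
  · rw [h]; simp; positivity
  · exact gbar_osc_core g hg_nonneg hg_int hg_one hTV h (by linarith [hu.2, hv.1])

lemma gbar_integrableOn (g : ℝ → ℝ) (hg_nonneg : ∀ y, 0 ≤ g y) (hg_int : Integrable g)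
    (hg_one : ∫ y, g y = 1) (hTV : eVariationOn g univ ≠ ⊤)
    {s : Set ℝ} (hμ' : volume s ≠ ⊤) :
    IntegrableOn (fun u : ℝ => ∑' n : ℤ, g (n + u)) s := by
  refine Integrable.mono' (g := fun _ => 1 + (eVariationOn g univ).toReal)
    (integrableOn_const hμ')
    ((gbar_aemeasurable g hg_nonneg hg_int).aestronglyMeasurable.restrict)
    (Eventually.of_forall fun u => ?_)
  rw [Real.norm_eq_abs, abs_of_nonneg (gbar_nonneg' g hg_nonneg u)]
  exact gbar_le g hg_nonneg hg_int hg_one hTV u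

/-- Dümbgen–Leuenberger Corollary 2: for the CDF `Ḡ` of the fractional part of a random
variable with density `g` of finite total variation,
`|(Ḡ z₂ − Ḡ z₁) − (z₂ − z₁)| ≤ (z₂−z₁)(1−(z₂−z₁))·TV(g)/2`. -/
theorem fract_cdf_increment_bound
    (g : ℝ → ℝ) (hg_nonneg : ∀ y, 0 ≤ g y)
    (hg_int : Integrable g)
    (hg_one : ∫ y, g y = 1)
    (hTV : eVariationOn g univ ≠ ⊤)
    (G : ℝ → ℝ)
    (hG : ∀ z, G z = ∫ u in (0 : ℝ)..z, ∑' n : ℤ, g (n + u)) :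
    ∀ z₁ z₂ : ℝ, 0 ≤ z₁ → z₁ < z₂ → z₂ ≤ 1 →
      |(G z₂ - G z₁) - (z₂ - z₁)|
        ≤ (z₂ - z₁) * (1 - (z₂ - z₁)) * (eVariationOn g univ).toReal / 2 := by
  intro z₁ z₂ h0 h12 h21
  set V := (eVariationOn g univ).toReal with hV
  have hV0 : 0 ≤ V := ENNReal.toReal_nonneg
  set gb : ℝ → ℝ := fun u => ∑' n : ℤ, g (n + u) with hgb
  set δ := z₂ - z₁ with hδ
  have hδ0 : 0 < δ := by simp only [hδ]; linarith
  have hδ1 : δ ≤ 1 := by simp only [hδ]; linarith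
  -- integrability
  have hio : ∀ s : Set ℝ, volume s ≠ ⊤ → IntegrableOn gb s :=
    fun s hs => gbar_integrableOn g hg_nonneg hg_int hg_one hTV hs
  have hioIoc : ∀ a b : ℝ, IntegrableOn gb (Ioc a b) := by
    intro a b
    apply hio
    rw [Real.volume_Ioc]
    exact ENNReal.ofReal_ne_top
  -- G as set integrals
  have hGset : ∀ z : ℝ, 0 ≤ z → G z = ∫ u in Ioc (0:ℝ) z, gb u := by
    intro z hz
    rw [hG z, intervalIntegral.integral_of_le hz]
  -- decomposition
  have hsplit1 : ∫ u in Ioc (0:ℝ) z₂, gb u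
      = (∫ u in Ioc (0:ℝ) z₁, gb u) + ∫ u in Ioc z₁ z₂, gb u := by
    rw [← Set.Ioc_union_Ioc_eq_Ioc h0 h12.le]
    exact setIntegral_union (Set.Ioc_disjoint_Ioc_of_le le_rfl) measurableSet_Ioc
      (hioIoc 0 z₁) (hioIoc z₁ z₂)
  have hone : ∫ u in Ioc (0:ℝ) 1, gb u = 1 := gbar_integral_one g hg_nonneg hg_int hg_one
  have hsplit2 : (1:ℝ)
      = (∫ u in Ioc (0:ℝ) z₂, gb u) + ∫ u in Ioc z₂ 1, gb u := by
    have hu : ∫ u in Ioc (0:ℝ) z₂ ∪ Ioc z₂ 1, gb u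
        = (∫ u in Ioc (0:ℝ) z₂, gb u) + ∫ u in Ioc z₂ 1, gb u :=
      setIntegral_union (Set.Ioc_disjoint_Ioc_of_le le_rfl) measurableSet_Ioc
        (hioIoc 0 z₂) (hioIoc z₂ 1)
    rw [Set.Ioc_union_Ioc_eq_Ioc (by linarith : (0:ℝ) ≤ z₂) h21, hone] at hu
    exact hu
  set A := ∫ u in Ioc z₁ z₂, gb u with hA
  have hGdiff : G z₂ - G z₁ = A := by
    rw [hGset z₂ (by linarith), hGset z₁ h0, hsplit1]; ring
  rw [hGdiff]
  -- the complement set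
  set s₂ : Set ℝ := Ioc 0 z₁ ∪ Ioc z₂ 1 with hs₂
  have hs₂meas : MeasurableSet s₂ := (measurableSet_Ioc).union measurableSet_Ioc
  have hs₂disj : Disjoint (Ioc (0:ℝ) z₁) (Ioc z₂ 1) := by
    rw [Set.Ioc_disjoint_Ioc]
    exact le_trans (min_le_left _ _) (le_trans h12.le (le_max_right _ _))
  have hs₂vol : volume s₂ = ENNReal.ofReal z₁ + ENNReal.ofReal (1 - z₂) := by
    rw [hs₂, measure_union hs₂disj measurableSet_Ioc, Real.volume_Ioc, Real.volume_Ioc,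
      sub_zero]
  have hs₂fin : volume s₂ ≠ ⊤ := by
    rw [hs₂vol]
    exact ENNReal.add_ne_top.2 ⟨ENNReal.ofReal_ne_top, ENNReal.ofReal_ne_top⟩
  have hs₂toReal : (volume s₂).toReal = 1 - δ := by
    rw [hs₂vol, ENNReal.toReal_add ENNReal.ofReal_ne_top ENNReal.ofReal_ne_top,
      ENNReal.toReal_ofReal h0, ENNReal.toReal_ofReal (by linarith)]
    simp only [hδ]; ring
  have hBval : ∫ u in s₂, gb u = 1 - A := by
    rw [hs₂, setIntegral_union hs₂disj measurableSet_Ioc (hioIoc 0 z₁) (hioIoc z₂ 1)]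
    have := hsplit2
    rw [hsplit1] at this
    linarith
  -- case δ = 1
  by_cases hδeq : δ = 1
  · have hz₁ : z₁ = 0 := by simp only [hδ] at hδeq; linarith
    have hz₂ : z₂ = 1 := by simp only [hδ] at hδeq; linarith
    have : A = 1 := by rw [hA, hz₁, hz₂, hone]
    rw [this, hδeq]
    simp
  -- main case
  have hδlt : δ < 1 := lt_of_le_of_ne hδ1 hδeq
  have h1δ : 0 < 1 - δ := by linarith
  have hs₁vol : volume (Ioc z₁ z₂) = ENNReal.ofReal δ := by
    rw [Real.volume_Ioc]
  have hs₁pos : 0 < volume (Ioc z₁ z₂) := by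
    rw [hs₁vol]; exact ENNReal.ofReal_pos.2 hδ0
  have hs₁fin : volume (Ioc z₁ z₂) ≠ ⊤ := by rw [hs₁vol]; exact ENNReal.ofReal_ne_top
  have hs₁toReal : (volume (Ioc z₁ z₂)).toReal = δ := by
    rw [hs₁vol, ENNReal.toReal_ofReal hδ0.le]
  have hs₂pos : 0 < volume s₂ := by
    rcases (show 0 ≤ volume s₂ from zero_le).lt_or_eq with h | h
    · exact h
    · exfalso
      rw [← h, ENNReal.toReal_zero] at hs₂toReal
      linarith
  have hsub₁ : Ioc z₁ z₂ ⊆ Ioc (0:ℝ) 1 := Set.Ioc_subset_Ioc h0 h21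
  have hsub₂ : s₂ ⊆ Ioc (0:ℝ) 1 := by
    rw [hs₂]
    exact Set.union_subset (Set.Ioc_subset_Ioc le_rfl (by linarith))
      (Set.Ioc_subset_Ioc (by linarith) le_rfl)
  -- key ε bound
  have hkey : ∀ ε > 0, A - δ ≤ δ * (1 - δ) * (V/2) + 2 * ε * (δ * (1 - δ)) := by
    intro ε hε
    obtain ⟨u, hu, hu2⟩ := exists_ge_avg measurableSet_Ioc hs₁pos hs₁fin
      (hioIoc z₁ z₂) hε (f := gb)
    obtain ⟨v, hv, hv2⟩ := exists_le_avg hs₂meas hs₂pos hs₂fin (hio s₂ hs₂fin) hε (f := gb)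
    rw [hs₁toReal, ← hA] at hu2
    rw [hs₂toReal, hBval] at hv2
    have hosc : gb u - gb v ≤ V / 2 :=
      gbar_osc g hg_nonneg hg_int hg_one hTV (hsub₁ hu) (hsub₂ hv)
    exact key_arith1 A δ ε (gb u) (gb v) V hδ0 hδlt hu2 hv2 hosc
  have hkey2 : ∀ ε > 0, δ - A ≤ δ * (1 - δ) * (V/2) + 2 * ε * (δ * (1 - δ)) := by
    intro ε hε
    obtain ⟨u, hu, hu2⟩ := exists_le_avg measurableSet_Ioc hs₁pos hs₁fin
      (hioIoc z₁ z₂) hε (f := gb)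
    obtain ⟨v, hv, hv2⟩ := exists_ge_avg hs₂meas hs₂pos hs₂fin (hio s₂ hs₂fin) hε (f := gb)
    rw [hs₁toReal, ← hA] at hu2
    rw [hs₂toReal, hBval] at hv2
    have hosc : gb v - gb u ≤ V / 2 :=
      gbar_osc g hg_nonneg hg_int hg_one hTV (hsub₂ hv) (hsub₁ hu)
    exact key_arith2 A δ ε (gb u) (gb v) V hδ0 hδlt hu2 hv2 hosc
  have hup : A - δ ≤ δ * (1 - δ) * V / 2 := by
    refine le_of_forall_pos_le_add fun ε hε => ?_
    have h2 := hkey (ε / (2 * (δ * (1 - δ)))) (by positivity)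
    have hne : δ * (1 - δ) ≠ 0 := (mul_pos hδ0 h1δ).ne'
    have heq : 2 * (ε / (2 * (δ * (1 - δ)))) * (δ * (1 - δ)) = ε := by
      field_simp
    rw [heq] at h2
    linarith
  have hdown : δ - A ≤ δ * (1 - δ) * V / 2 := by
    refine le_of_forall_pos_le_add fun ε hε => ?_
    have h2 := hkey2 (ε / (2 * (δ * (1 - δ)))) (by positivity)
    have hne : δ * (1 - δ) ≠ 0 := (mul_pos hδ0 h1δ).ne'
    have heq : 2 * (ε / (2 * (δ * (1 - δ)))) * (δ * (1 - δ)) = ε := by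
      field_simp
    rw [heq] at h2
    linarith
  rw [abs_le]
  constructor <;> [linarith; linarith]
end

section
/- Let X > 0 be a random variable such that Y = log₁₀ X has a density g that is continuous on ℝ and affine on each interval [n, n+1] for n ∈ ℤ. Then the fractional part of Y is uniformly distributed on [0,1] and X satisfies the Benford law exactly. -/
open Set MeasureTheory

private lemma floor_piece (n : ℤ) : Ico ((n : ℝ)) (n + 1) = Int.floor ⁻¹' {n} := by
  ext x
  simp only [mem_Ico, mem_preimage, mem_singleton_iff, Int.floor_eq_iff]

private lemma fract_preimage_piece (s : Set ℝ) (n : ℤ) :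
    Int.fract ⁻¹' s ∩ Ico ((n : ℝ)) (n + 1) = (fun x => x + (n : ℝ)) '' (s ∩ Ico 0 1) := by
  ext y
  constructor
  · rintro ⟨hs, h0, h1⟩
    have hfl : ⌊y⌋ = n := Int.floor_eq_iff.mpr ⟨h0, h1⟩
    have hfr : Int.fract y = y - n := by rw [Int.fract, hfl]
    exact ⟨y - n, ⟨by rwa [← hfr], ⟨by linarith, by linarith⟩⟩, by ring⟩
  · rintro ⟨x, ⟨hxs, hx0, hx1⟩, rfl⟩
    have hfr : Int.fract (x + (n : ℝ)) = x := by
      rw [Int.fract_add_intCast]; exact Int.fract_eq_self.mpr ⟨hx0, hx1⟩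
    refine ⟨by rwa [mem_preimage, hfr], ?_⟩
    show (n : ℝ) ≤ x + n ∧ x + n < n + 1
    exact ⟨by linarith, by linarith⟩

private lemma key_lintegral (f : ℝ → ENNReal) (hf : Measurable f) (s : Set ℝ)
    (hs : MeasurableSet s) :
    ∫⁻ y in Int.fract ⁻¹' s, f y = ∫⁻ x in s ∩ Ico (0 : ℝ) 1, ∑' n : ℤ, f (x + n) := by
  have huniv : (⋃ n : ℤ, Ico ((n : ℝ)) (n + 1)) = univ := by
    ext x
    simp only [mem_iUnion, mem_univ, iff_true, mem_Ico]
    exact ⟨⌊x⌋, ⟨Int.floor_le x, Int.lt_floor_add_one x⟩⟩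
  have hcover : Int.fract ⁻¹' s = ⋃ n : ℤ, (Int.fract ⁻¹' s ∩ Ico ((n : ℝ)) (n + 1)) := by
    rw [← inter_iUnion, huniv, inter_univ]
  have hmeas : ∀ n : ℤ, MeasurableSet (Int.fract ⁻¹' s ∩ Ico ((n : ℝ)) (n + 1)) :=
    fun n => (measurable_fract hs).inter measurableSet_Ico
  have hdisj : Pairwise (Function.onFun Disjoint fun n : ℤ => Int.fract ⁻¹' s ∩ Ico ((n : ℝ)) (n + 1)) := by
    intro m n hmn
    refine Disjoint.mono inter_subset_right inter_subset_right ?_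
    rw [floor_piece, floor_piece]
    exact Disjoint.preimage _ (by simpa using hmn)
  rw [hcover, lintegral_iUnion hmeas hdisj]
  have hterm : ∀ n : ℤ, ∫⁻ y in Int.fract ⁻¹' s ∩ Ico ((n : ℝ)) (n + 1), f y
      = ∫⁻ x in s ∩ Ico (0 : ℝ) 1, f (x + n) := by
    intro n
    rw [fract_preimage_piece]
    exact ((measurePreserving_add_right volume (n : ℝ)).setLIntegral_comp_emb
      (MeasurableEquiv.addRight (n : ℝ)).measurableEmbedding f _).symm
  simp_rw [hterm]
  exact (lintegral_tsum fun n => (hf.comp (measurable_add_const _)).aemeasurable).symm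

/-- If `Y = log₁₀ X` has a continuous density `g` which is affine on each interval
`[n, n+1]` (`n ∈ ℤ`), then the fractional part of `Y` is uniform on `[0,1)` and
`X` satisfies Benford's law exactly. -/
theorem benford_of_piecewise_affine_density
    {Ω : Type*} [MeasurableSpace Ω] (μ : Measure Ω) [IsProbabilityMeasure μ]
    (X : Ω → ℝ) (hXmeas : Measurable X) (hXpos : ∀ ω, 0 < X ω)
    (Y : Ω → ℝ) (hY : ∀ ω, Y ω = Real.logb 10 (X ω))
    (g : ℝ → ℝ) (hg_nonneg : ∀ y, 0 ≤ g y) (hg_cont : Continuous g)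
    (hg_affine : ∀ n : ℤ, ∀ y ∈ Icc (0 : ℝ) 1,
      g (n + y) = (1 - y) * g n + y * g (n + 1))
    (hdens : Measure.map Y μ
      = volume.withDensity (fun y => ENNReal.ofReal (g y))) :
    Measure.map (fun ω => Int.fract (Y ω)) μ = volume.restrict (Ico (0 : ℝ) 1)
      ∧ ∀ k : ℕ, k ∈ Finset.Icc 1 9 →
          μ {ω | ∃ n : ℤ, X ω ∈ Ico ((k : ℝ) * 10 ^ n) (((k : ℝ) + 1) * 10 ^ n)}
            = ENNReal.ofReal (Real.logb 10 ((k + 1) / k)) := by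
  set f : ℝ → ENNReal := fun y => ENNReal.ofReal (g y) with hf_def
  have hf : Measurable f := (ENNReal.continuous_ofReal.comp hg_cont).measurable
  have hYm : Measurable Y := by
    have hYe : Y = fun ω => Real.log (X ω) / Real.log 10 := by
      funext ω; rw [hY ω, Real.logb]
    rw [hYe]
    exact (Real.measurable_log.comp hXmeas).div_const _
  have hshift : ∑' n : ℤ, f ((n : ℝ) + 1) = ∑' n : ℤ, f ((n : ℝ)) := by
    have h := Equiv.tsum_eq (Equiv.addRight (1 : ℤ)) (fun n : ℤ => f ((n : ℝ)))
    simp only [Equiv.coe_addRight] at h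
    rw [← h]
    apply tsum_congr; intro n
    push_cast
    rfl
  have hSconst : ∀ x ∈ Icc (0 : ℝ) 1, ∑' n : ℤ, f (x + n) = ∑' n : ℤ, f ((n : ℝ)) := by
    intro x hx
    obtain ⟨hx0, hx1⟩ := hx
    have haff : ∀ n : ℤ, f (x + n)
        = ENNReal.ofReal (1 - x) * f ((n : ℝ)) + ENNReal.ofReal x * f ((n : ℝ) + 1) := by
      intro n
      have hg := hg_affine n x ⟨hx0, hx1⟩
      rw [hf_def]
      simp only [add_comm x (n : ℝ)] at *
      rw [hg, ENNReal.ofReal_add (mul_nonneg (by linarith) (hg_nonneg _))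
        (mul_nonneg hx0 (hg_nonneg _)),
        ENNReal.ofReal_mul (by linarith), ENNReal.ofReal_mul hx0]
    calc ∑' n : ℤ, f (x + n)
        = ∑' n : ℤ, (ENNReal.ofReal (1 - x) * f ((n : ℝ)) + ENNReal.ofReal x * f ((n : ℝ) + 1)) :=
          tsum_congr haff
      _ = ENNReal.ofReal (1 - x) * ∑' n : ℤ, f ((n : ℝ))
            + ENNReal.ofReal x * ∑' n : ℤ, f ((n : ℝ) + 1) := by
          rw [ENNReal.tsum_add, ENNReal.tsum_mul_left, ENNReal.tsum_mul_left]
      _ = (ENNReal.ofReal (1 - x) + ENNReal.ofReal x) * ∑' n : ℤ, f ((n : ℝ)) := by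
          rw [hshift]; ring
      _ = ∑' n : ℤ, f ((n : ℝ)) := by
          rw [← ENNReal.ofReal_add (by linarith) hx0,
            show (1 : ℝ) - x + x = 1 by ring, ENNReal.ofReal_one, one_mul]
  have htotal : ∫⁻ y, f y = 1 := by
    have h1 : Measure.map Y μ univ = 1 := by
      rw [Measure.map_apply hYm MeasurableSet.univ]; simp
    rw [hdens, withDensity_apply _ MeasurableSet.univ, Measure.restrict_univ] at h1
    exact h1
  have hS1 : ∑' n : ℤ, f ((n : ℝ)) = 1 := by
    have hkey : ∫⁻ y, f y = ∫⁻ x in univ ∩ Ico (0 : ℝ) 1, ∑' n : ℤ, f (x + n) := by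
      rw [← key_lintegral f hf univ MeasurableSet.univ]
      simp
    rw [htotal, univ_inter] at hkey
    rw [setLIntegral_congr_fun measurableSet_Ico
      (fun x hx => hSconst x ⟨hx.1, hx.2.le⟩)] at hkey
    rw [lintegral_const, Measure.restrict_apply MeasurableSet.univ, univ_inter,
      Real.volume_Ico] at hkey
    simpa using hkey.symm
  have hmap : Measure.map (fun ω => Int.fract (Y ω)) μ = volume.restrict (Ico (0 : ℝ) 1) := by
    have hcomp : (fun ω => Int.fract (Y ω)) = Int.fract ∘ Y := rfl
    ext s hs
    rw [hcomp, ← Measure.map_map measurable_fract hYm, hdens,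
      Measure.map_apply measurable_fract hs, withDensity_apply _ (measurable_fract hs),
      key_lintegral f hf s hs,
      setLIntegral_congr_fun (hs.inter measurableSet_Ico)
        (fun x hx => by
          rw [hSconst x ⟨hx.2.1, hx.2.2.le⟩, hS1]),
      setLIntegral_one, Measure.restrict_apply hs]
  refine ⟨hmap, ?_⟩
  intro k hk
  simp only [Finset.mem_Icc] at hk
  have hk1 : (1 : ℝ) ≤ (k : ℝ) := by exact_mod_cast hk.1
  have hk9 : (k : ℝ) ≤ 9 := by exact_mod_cast hk.2
  have hkpos : (0 : ℝ) < k := by linarith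
  have h10 : (1 : ℝ) < 10 := by norm_num
  have hlogk0 : 0 ≤ Real.logb 10 (k : ℝ) := Real.logb_nonneg h10 hk1
  have hlogk1 : Real.logb 10 ((k : ℝ) + 1) ≤ 1 := by
    have h := (Real.logb_le_logb h10 (by linarith) (by norm_num : (0:ℝ) < 10)).mpr
      (by linarith : (k : ℝ) + 1 ≤ 10)
    rwa [Real.logb_self_eq_one h10] at h
  have hlog_mul : ∀ n : ℤ, ∀ c : ℝ, 0 < c →
      Real.logb 10 (c * 10 ^ n) = Real.logb 10 c + n := by
    intro n c hc
    rw [Real.logb_mul hc.ne' (by positivity), show ((10 : ℝ) ^ n) = (10 : ℝ) ^ ((n : ℝ)) from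
      (Real.rpow_intCast 10 n).symm, Real.logb_rpow (by norm_num) (by norm_num)]
  have hset : {ω | ∃ n : ℤ, X ω ∈ Ico ((k : ℝ) * 10 ^ n) (((k : ℝ) + 1) * 10 ^ n)}
      = (fun ω => Int.fract (Y ω)) ⁻¹' Ico (Real.logb 10 (k : ℝ))
          (Real.logb 10 ((k : ℝ) + 1)) := by
    ext ω
    have hx : (0 : ℝ) < X ω := hXpos ω
    have hYω : Y ω = Real.logb 10 (X ω) := hY ω
    simp only [mem_setOf_eq, mem_preimage, mem_Ico]
    constructor
    · rintro ⟨n, h1, h2⟩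
      have hY1 : (n : ℝ) + Real.logb 10 (k : ℝ) ≤ Y ω := by
        have := (Real.logb_le_logb h10 (by positivity) hx).mpr h1
        rw [hlog_mul n k hkpos] at this
        rw [hYω]; linarith
      have hY2 : Y ω < (n : ℝ) + Real.logb 10 ((k : ℝ) + 1) := by
        have := Real.logb_lt_logb h10 hx h2
        rw [hlog_mul n ((k : ℝ) + 1) (by linarith)] at this
        rw [hYω]; linarith
      have hfl : ⌊Y ω⌋ = n := Int.floor_eq_iff.mpr ⟨by linarith, by linarith⟩
      have hfr : Int.fract (Y ω) = Y ω - n := by rw [Int.fract, hfl]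
      rw [hfr]
      exact ⟨by linarith, by linarith⟩
    · rintro ⟨h1, h2⟩
      rw [Int.fract] at h1 h2
      refine ⟨⌊Y ω⌋, ?_, ?_⟩
      · have hle : Real.logb 10 ((k : ℝ) * 10 ^ (⌊Y ω⌋)) ≤ Real.logb 10 (X ω) := by
          rw [hlog_mul _ (k : ℝ) hkpos, ← hYω]; linarith
        exact (Real.logb_le_logb h10 (by positivity) hx).mp hle
      · have hlt : Real.logb 10 (X ω) < Real.logb 10 (((k : ℝ) + 1) * 10 ^ (⌊Y ω⌋)) := by
          rw [hlog_mul _ ((k : ℝ) + 1) (by linarith), ← hYω]; linarith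
        by_contra hcon
        push_neg at hcon
        exact absurd ((Real.logb_le_logb h10 (by positivity) hx).mpr hcon) (not_le.mpr hlt)
  have hmeasfY : Measurable fun ω => Int.fract (Y ω) := measurable_fract.comp hYm
  rw [hset, ← Measure.map_apply hmeasfY measurableSet_Ico, hmap,
    Measure.restrict_apply measurableSet_Ico]
  have hsub : Ico (Real.logb 10 (k : ℝ)) (Real.logb 10 ((k : ℝ) + 1)) ∩ Ico (0 : ℝ) 1
      = Ico (Real.logb 10 (k : ℝ)) (Real.logb 10 ((k : ℝ) + 1)) := by
    rw [inter_eq_left]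
    exact fun x hx => ⟨le_trans hlogk0 hx.1, lt_of_lt_of_le hx.2 hlogk1⟩
  rw [hsub, Real.volume_Ico]
  congr 1
  rw [Real.logb_div (by positivity) hkpos.ne']
end
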